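/- arXiv:2311.14251 — 4 statements merged into one kernel-verified Lean document; each statement's English description precedes it below -/
import Mathlib

section
/- Let Q_0 and Q_1 be probability distributions on a finite alphabet having a common support point, and let p_min be the smallest nonzero value among the probabilities Q_0(x) and Q_1(x). Then for all s ∈ (0,1): |d_C'(Q_0, Q_1, s)| ≤ log(1/p_min), and 0 ≤ −d_C''(Q_0, Q_1, s) ≤ (log(1/p_min))^2. -/
open scoped BigOperators
open Finset

noncomputable section

/-- A probability mass function on a finite type, given as a real-valued function. -/
def IsPMF {α : Type*} [Fintype α] (p : α → ℝ) : Prop :=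
  (∀ x, 0 ≤ p x) ∧ ∑ x, p x = 1

/-- A discrete memoryless channel: every input symbol yields a PMF on outputs. -/
def IsChannel {X Y : Type*} [Fintype Y] (P : X → Y → ℝ) : Prop :=
  ∀ x, IsPMF (P x)

/-- The Chernoff sum `Σ_x p(x)^{1-s} q(x)^s`, with terms where `p` or `q` vanish removed;
this realizes the continuous extension to the endpoints `s ∈ {0,1}`. -/
def cherSum {α : Type*} [Fintype α] (p q : α → ℝ) (s : ℝ) : ℝ :=
  ∑ x, if p x = 0 ∨ q x = 0 then 0 else p x ^ (1 - s) * q x ^ s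

/-- The Chernoff divergence `d_C(p, q, s)`. -/
def dC {α : Type*} [Fintype α] (p q : α → ℝ) (s : ℝ) : ℝ :=
  - Real.log (cherSum p q s)

/-- First derivative of the Chernoff divergence with respect to `s`. -/
def dC' {α : Type*} [Fintype α] (p q : α → ℝ) (s : ℝ) : ℝ :=
  deriv (dC p q) s

/-- Second derivative of the Chernoff divergence with respect to `s`. -/
def dC'' {α : Type*} [Fintype α] (p q : α → ℝ) (s : ℝ) : ℝ :=
  deriv (deriv (dC p q)) s

/-- The tilted distribution `Q_s`. -/
def tilted {α : Type*} [Fintype α] (p q : α → ℝ) (s : ℝ) (x : α) : ℝ :=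
  (if p x = 0 ∨ q x = 0 then 0 else p x ^ (1 - s) * q x ^ s) / cherSum p q s

/-- Kullback–Leibler divergence (natural log), with the convention `0 log 0 = 0`. -/
def KLdiv {α : Type*} [Fintype α] (p q : α → ℝ) : ℝ :=
  ∑ x, if p x = 0 then 0 else p x * Real.log (p x / q x)

/-- Product (memoryless) output distribution of a channel given an input string. -/
def prodDist {X Y : Type*} [Fintype Y] {n : ℕ} (P : X → Y → ℝ) (w : Fin n → X) :
    (Fin n → Y) → ℝ :=
  fun y => ∏ i, P (w i) (y i)

/-- Two distributions have a common support point. -/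
def CommonSupport {α : Type*} (p q : α → ℝ) : Prop :=
  ∃ x, p x ≠ 0 ∧ q x ≠ 0

/-- `pmin` is the smallest nonzero transition probability of the channel `Q`. -/
def MinTransChan {X Y : Type*} (Q : X → Y → ℝ) (pmin : ℝ) : Prop :=
  0 < pmin ∧ (∃ x y, Q x y = pmin) ∧ ∀ x y, Q x y ≠ 0 → pmin ≤ Q x y

/-- `pmin` is the smallest nonzero transition probability among the channels `P` and `Q`. -/
def MinTransPair {Y Z : Type*} (P : Bool → Y → ℝ) (Q : Bool → Z → ℝ) (pmin : ℝ) : Prop :=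
  0 < pmin ∧ ((∃ b y, P b y = pmin) ∨ (∃ b z, Q b z = pmin)) ∧
    (∀ b y, P b y ≠ 0 → pmin ≤ P b y) ∧ ∀ b z, Q b z ≠ 0 → pmin ≤ Q b z

/-- `pmin` is the smallest nonzero probability among the values of two distributions. -/
def MinProbPair {α : Type*} (p q : α → ℝ) (pmin : ℝ) : Prop :=
  0 < pmin ∧ ((∃ x, p x = pmin) ∨ (∃ x, q x = pmin)) ∧
    (∀ x, p x ≠ 0 → pmin ≤ p x) ∧ ∀ x, q x ≠ 0 → pmin ≤ q x

/-- A deterministic `n`-step 2-hop protocol: codewords `x false = x⃗₀`, `x true = x⃗₁`,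
relay maps (the `i`-th transmission may depend only on the previously received symbols),
and a decoder. -/
structure DetProtocol (Y Z : Type*) (n : ℕ) where
  x : Bool → Fin n → Bool
  relay : (i : Fin n) → (Fin i → Y) → Bool
  dec : (Fin n → Z) → Bool

/-- The relay transmissions `W_1, …, W_n` determined by the received sequence `y`. -/
def DetProtocol.W {Y Z : Type*} {n : ℕ} (π : DetProtocol Y Z n) (y : Fin n → Y)
    (i : Fin n) : Bool :=
  π.relay i (fun j => y (Fin.castLE i.isLt.le j))

/-- `errProb P Q π b` is the conditional error probability `ℙ(Θ̂ = ¬b ∣ Θ = b)`. -/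
def errProb {Y Z : Type*} [Fintype Y] [Fintype Z] {n : ℕ}
    (P : Bool → Y → ℝ) (Q : Bool → Z → ℝ) (π : DetProtocol Y Z n) (b : Bool) : ℝ :=
  ∑ y : Fin n → Y, ∑ z : Fin n → Z,
    prodDist P (π.x b) y * prodDist Q (π.W y) z *
      (if π.dec z = !b then 1 else 0)

/-- Probability (given `Θ = b`) that the relay receives the prefix `ypre` in the
first `k` time steps. -/
def prefixProb {Y Z : Type*} [Fintype Y] {n : ℕ} (P : Bool → Y → ℝ)
    (π : DetProtocol Y Z n) (b : Bool) {k : ℕ} (hk : k ≤ n) (ypre : Fin k → Y) : ℝ :=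
  ∏ i : Fin k, P (π.x b (Fin.castLE hk i)) (ypre i)

/-- `errGiven P Q π b hk ypre` is the conditional error probability `p_{e,b}(y_{1…k})`:
the probability that `Θ̂ = ¬b` given `Θ = b` and that the relay receives `ypre` in the
first `k` time steps. -/
def errGiven {Y Z : Type*} [Fintype Y] [Fintype Z] {n : ℕ}
    (P : Bool → Y → ℝ) (Q : Bool → Z → ℝ) (π : DetProtocol Y Z n) (b : Bool)
    {k : ℕ} (hk : k ≤ n) (ypre : Fin k → Y) : ℝ :=
  (∑ y : Fin n → Y, ∑ z : Fin n → Z,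
      Set.indicator {y' : Fin n → Y | ∀ i : Fin k, y' (Fin.castLE hk i) = ypre i}
          (fun _ => (1 : ℝ)) y *
        prodDist P (π.x b) y * prodDist Q (π.W y) z *
        (if π.dec z = !b then 1 else 0)) /
    prefixProb P π b hk ypre

/-- The first `k` relay transmissions `w⃗(y_{1…k})`, determined by the first `k`
received symbols. -/
def relayPrefix {Y Z : Type*} {n : ℕ} (π : DetProtocol Y Z n) {k : ℕ} (hk : k ≤ n)
    (ypre : Fin k → Y) (i : Fin k) : Bool :=
  π.relay (Fin.castLE hk i) (fun j => ypre (Fin.castLE i.isLt.le j))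

/-- Probability that the decoder outputs `b` when the relay input string is `w`. -/
def decProb {Z : Type*} [Fintype Z] {n : ℕ} (Q : Bool → Z → ℝ)
    (dec : (Fin n → Z) → Bool) (b : Bool) (w : Fin n → Bool) : ℝ :=
  ∑ z : Fin n → Z, prodDist Q w z * (if dec z = b then 1 else 0)

/-- `w` extends the relay's first `k` transmissions (after receiving `ypre`) to length `n`,
minimizing the probability that the decoder outputs `b`, i.e. `w = w⃗_{1-b}(y_{1…k})`. -/
def IsBestExtension {Y Z : Type*} [Fintype Z] {n : ℕ} (Q : Bool → Z → ℝ)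
    (π : DetProtocol Y Z n) (b : Bool) {k : ℕ} (hk : k ≤ n) (ypre : Fin k → Y)
    (w : Fin n → Bool) : Prop :=
  (∀ i : Fin k, w (Fin.castLE hk i) = relayPrefix π hk ypre i) ∧
    ∀ w' : Fin n → Bool,
      (∀ i : Fin k, w' (Fin.castLE hk i) = relayPrefix π hk ypre i) →
        decProb Q π.dec b w ≤ decProb Q π.dec b w'

/-- A randomized `n`-step 2-hop protocol: a finite collection of deterministic
protocols together with a probability distribution (the shared private randomness). -/
structure RandProtocol (Y Z : Type*) (n : ℕ) where
  m : ℕ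
  ρ : Fin m → ℝ
  det : Fin m → DetProtocol Y Z n

/-- Validity of the randomness distribution of a randomized protocol. -/
def RandProtocol.Valid {Y Z : Type*} {n : ℕ} (π : RandProtocol Y Z n) : Prop :=
  (∀ r, 0 ≤ π.ρ r) ∧ ∑ r, π.ρ r = 1

/-- Overall error probability `ℙ(Θ̂ ≠ Θ)` of a randomized protocol, with `Θ` uniform. -/
def randPe {Y Z : Type*} [Fintype Y] [Fintype Z] {n : ℕ}
    (P : Bool → Y → ℝ) (Q : Bool → Z → ℝ) (π : RandProtocol Y Z n) : ℝ :=
  ∑ r, π.ρ r * ((errProb P Q (π.det r) false + errProb P Q (π.det r) true) / 2)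

/-- The 2-hop error exponent `E(P,Q)`: the supremum, over sequences of (randomized)
protocols, of the liminf of `-(1/n) log P_e(n,P,Q)`. -/
def twoHopExponent {Y Z : Type*} [Fintype Y] [Fintype Z]
    (P : Bool → Y → ℝ) (Q : Bool → Z → ℝ) : ℝ :=
  sSup { E | ∃ π : (n : ℕ) → RandProtocol Y Z n, (∀ n, (π n).Valid) ∧
    E = Filter.liminf (fun n : ℕ => -(1 / (n : ℝ)) * Real.log (randPe P Q (π n)))
          Filter.atTop }

/-- `m` is the unique global maximizer of `g` on `[0,1]`. -/
def UniqueArgmax (g : ℝ → ℝ) (m : ℝ) : Prop :=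
  m ∈ Set.Icc (0 : ℝ) 1 ∧ ∀ s ∈ Set.Icc (0 : ℝ) 1, s ≠ m → g s < g m

/-- `g` is skewed with respect to `s*`. -/
def SkewedFun (sStar : ℝ) (g : ℝ → ℝ) : Prop :=
  ∃ m, UniqueArgmax g m ∧ (m < sStar ∨ 1 - sStar < m)

/-- `g` is balanced with respect to `s*`. -/
def BalancedFun (sStar : ℝ) (g : ℝ → ℝ) : Prop :=
  ∃ m, UniqueArgmax g m ∧ sStar < m ∧ m < 1 - sStar

/-- `g` is neutral with respect to `s*`. -/
def NeutralFun (sStar : ℝ) (g : ℝ → ℝ) : Prop :=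
  ∃ m, UniqueArgmax g m ∧ (m = sStar ∨ m = 1 - sStar)

/-- `g` and `h` are of strictly opposite type w.r.t. `s*`. -/
def StrictlyOppositeType (sStar : ℝ) (g h : ℝ → ℝ) : Prop :=
  (SkewedFun sStar g ∧ BalancedFun sStar h) ∨ (BalancedFun sStar g ∧ SkewedFun sStar h)

/-- `g` and `h` are of weakly opposite type w.r.t. `s*`. -/
def WeaklyOppositeType (sStar : ℝ) (g h : ℝ → ℝ) : Prop :=
  ((SkewedFun sStar g ∨ NeutralFun sStar g) ∧ (BalancedFun sStar h ∨ NeutralFun sStar h)) ∨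
    ((BalancedFun sStar g ∨ NeutralFun sStar g) ∧ (SkewedFun sStar h ∨ NeutralFun sStar h))

/-- `g` is non-constant on `[0,1]`. -/
def NonConstantOn (g : ℝ → ℝ) : Prop :=
  ∃ s₁ ∈ Set.Icc (0 : ℝ) 1, ∃ s₂ ∈ Set.Icc (0 : ℝ) 1, g s₁ ≠ g s₂

/-- The quantity `E_s` from the paper. -/
def Efun {Y Z : Type*} [Fintype Y] [Fintype Z]
    (P : Bool → Y → ℝ) (Q : Bool → Z → ℝ) (s : ℝ) : ℝ :=
  min (max (dC (P false) (P true) s) (dC (P false) (P true) (1 - s)))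
      (max (dC (Q false) (Q true) s) (dC (Q false) (Q true) (1 - s)))


/-- Auxiliary weight: `p x` on the common support, else `0`. -/
def auxW {α : Type*} (p q : α → ℝ) (x : α) : ℝ := if p x = 0 ∨ q x = 0 then 0 else p x

/-- Auxiliary log-likelihood ratio. -/
def auxC {α : Type*} (p q : α → ℝ) (x : α) : ℝ := Real.log (q x) - Real.log (p x)

def auxG {α : Type*} [Fintype α] (p q : α → ℝ) (s : ℝ) : ℝ :=
  ∑ x, auxW p q x * Real.exp (s * auxC p q x)

def auxG1 {α : Type*} [Fintype α] (p q : α → ℝ) (s : ℝ) : ℝ :=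
  ∑ x, auxW p q x * auxC p q x * Real.exp (s * auxC p q x)

def auxG2 {α : Type*} [Fintype α] (p q : α → ℝ) (s : ℝ) : ℝ :=
  ∑ x, auxW p q x * auxC p q x ^ 2 * Real.exp (s * auxC p q x)

lemma auxW_nonneg {α : Type*} (p q : α → ℝ) (hp : ∀ x, 0 ≤ p x) (x : α) :
    0 ≤ auxW p q x := by
  unfold auxW; split
  · exact le_refl 0
  · exact hp x

lemma cherSum_eq_auxG {α : Type*} [Fintype α] (p q : α → ℝ)
    (hp : ∀ x, 0 ≤ p x) (hq : ∀ x, 0 ≤ q x) (s : ℝ) :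
    cherSum p q s = auxG p q s := by
  unfold cherSum auxG auxW auxC
  refine Finset.sum_congr rfl fun x _ => ?_
  by_cases h : p x = 0 ∨ q x = 0
  · simp [h]
  · push_neg at h
    have hp' : 0 < p x := lt_of_le_of_ne (hp x) (Ne.symm h.1)
    have hq' : 0 < q x := lt_of_le_of_ne (hq x) (Ne.symm h.2)
    rw [if_neg (by tauto), if_neg (by tauto)]
    rw [Real.rpow_def_of_pos hp', Real.rpow_def_of_pos hq', ← Real.exp_add,
      show Real.log (p x) * (1 - s) + Real.log (q x) * s
        = Real.log (p x) + s * (Real.log (q x) - Real.log (p x)) by ring,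
      Real.exp_add, Real.exp_log hp']

lemma auxG_hasDerivAt {α : Type*} [Fintype α] (p q : α → ℝ) (s : ℝ) :
    HasDerivAt (auxG p q) (auxG1 p q s) s := by
  show HasDerivAt (fun t => ∑ x, auxW p q x * Real.exp (t * auxC p q x)) _ s
  refine HasDerivAt.fun_sum fun x _ => ?_
  have h : HasDerivAt (fun t => auxW p q x * Real.exp (t * auxC p q x))
      (auxW p q x * (Real.exp (s * auxC p q x) * auxC p q x)) s :=
    ((hasDerivAt_mul_const (auxC p q x)).exp).const_mul (auxW p q x)
  refine h.congr_deriv ?_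
  ring

lemma auxG1_hasDerivAt {α : Type*} [Fintype α] (p q : α → ℝ) (s : ℝ) :
    HasDerivAt (auxG1 p q) (auxG2 p q s) s := by
  show HasDerivAt (fun t => ∑ x, auxW p q x * auxC p q x * Real.exp (t * auxC p q x)) _ s
  refine HasDerivAt.fun_sum fun x _ => ?_
  have h : HasDerivAt (fun t => auxW p q x * auxC p q x * Real.exp (t * auxC p q x))
      (auxW p q x * auxC p q x * (Real.exp (s * auxC p q x) * auxC p q x)) s :=
    ((hasDerivAt_mul_const (auxC p q x)).exp).const_mul (auxW p q x * auxC p q x)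
  refine h.congr_deriv ?_
  ring

lemma auxG_pos {α : Type*} [Fintype α] (p q : α → ℝ) (hp : ∀ x, 0 ≤ p x)
    (hsupp : CommonSupport p q) (s : ℝ) : 0 < auxG p q s := by
  obtain ⟨x0, hx0p, hx0q⟩ := hsupp
  refine Finset.sum_pos' (fun x _ => mul_nonneg (auxW_nonneg p q hp x) (Real.exp_nonneg _))
    ⟨x0, Finset.mem_univ x0, ?_⟩
  have hw : auxW p q x0 = p x0 := by unfold auxW; rw [if_neg (by tauto)]
  rw [hw]
  exact mul_pos (lt_of_le_of_ne (hp x0) (Ne.symm hx0p)) (Real.exp_pos _)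

/-- Lemma 4 of the paper: bounds on the first and second derivatives
of the Chernoff divergence in terms of the smallest nonzero probability. -/
theorem dC_deriv_bounds {α : Type*} [Fintype α]
    (Q0 Q1 : α → ℝ) (h0 : IsPMF Q0) (h1 : IsPMF Q1)
    (hsupp : CommonSupport Q0 Q1)
    (pmin : ℝ) (hpmin : MinProbPair Q0 Q1 pmin)
    (s : ℝ) (hs : s ∈ Set.Ioo (0 : ℝ) 1) :
    |dC' Q0 Q1 s| ≤ Real.log (1 / pmin) ∧
      0 ≤ - dC'' Q0 Q1 s ∧ - dC'' Q0 Q1 s ≤ (Real.log (1 / pmin)) ^ 2 := by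
  obtain ⟨hp0, hpsum⟩ := h0
  obtain ⟨hq0, hqsum⟩ := h1
  obtain ⟨hpminpos, hex, hPle, hQle⟩ := hpmin
  set L : ℝ := Real.log (1 / pmin) with hLdef
  have hL : L = -Real.log pmin := by rw [hLdef, one_div, Real.log_inv]
  -- pmin ≤ 1
  have hle1 : ∀ (r : α → ℝ), (∀ x, 0 ≤ r x) → (∑ x, r x) = 1 → ∀ x, r x ≤ 1 := by
    intro r hr hsum x
    rw [← hsum]
    exact Finset.single_le_sum (fun i _ => hr i) (Finset.mem_univ x)
  have hpmin1 : pmin ≤ 1 := by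
    rcases hex with ⟨x, hx⟩ | ⟨x, hx⟩
    · rw [← hx]; exact hle1 Q0 hp0 hpsum x
    · rw [← hx]; exact hle1 Q1 hq0 hqsum x
  have hLnn : 0 ≤ L := by
    rw [hL]
    simpa using Real.log_nonpos (le_of_lt hpminpos) hpmin1
  -- key pointwise bound
  have hcb : ∀ x, auxW Q0 Q1 x ≠ 0 → |auxC Q0 Q1 x| ≤ L := by
    intro x hx
    have h : ¬ (Q0 x = 0 ∨ Q1 x = 0) := by
      intro h; unfold auxW at hx; rw [if_pos h] at hx; exact hx rfl
    push_neg at h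
    have h0p : pmin ≤ Q0 x := hPle x h.1
    have h1p : pmin ≤ Q1 x := hQle x h.2
    have l0a : Real.log pmin ≤ Real.log (Q0 x) := Real.log_le_log hpminpos h0p
    have l1a : Real.log pmin ≤ Real.log (Q1 x) := Real.log_le_log hpminpos h1p
    have l0b : Real.log (Q0 x) ≤ 0 :=
      Real.log_nonpos (le_trans (le_of_lt hpminpos) h0p) (hle1 Q0 hp0 hpsum x)
    have l1b : Real.log (Q1 x) ≤ 0 :=
      Real.log_nonpos (le_trans (le_of_lt hpminpos) h1p) (hle1 Q1 hq0 hqsum x)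
    rw [abs_le, hL]
    unfold auxC
    constructor <;> linarith
  have hpos : ∀ t, 0 < auxG Q0 Q1 t := auxG_pos Q0 Q1 hp0 hsupp
  -- identify the derivatives
  have hdC : dC Q0 Q1 = fun t => -Real.log (auxG Q0 Q1 t) := by
    funext t; unfold dC; rw [cherSum_eq_auxG Q0 Q1 hp0 hq0]
  have hD1 : ∀ t, HasDerivAt (dC Q0 Q1) (-(auxG1 Q0 Q1 t / auxG Q0 Q1 t)) t := by
    intro t
    rw [hdC]
    exact ((auxG_hasDerivAt Q0 Q1 t).log (ne_of_gt (hpos t))).neg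
  have hderiv1 : deriv (dC Q0 Q1) = fun t => -(auxG1 Q0 Q1 t / auxG Q0 Q1 t) :=
    funext fun t => (hD1 t).deriv
  have hD2 : HasDerivAt (deriv (dC Q0 Q1))
      (-((auxG2 Q0 Q1 s * auxG Q0 Q1 s - auxG1 Q0 Q1 s * auxG1 Q0 Q1 s) / auxG Q0 Q1 s ^ 2))
      s := by
    rw [hderiv1]
    exact ((auxG1_hasDerivAt Q0 Q1 s).div (auxG_hasDerivAt Q0 Q1 s) (ne_of_gt (hpos s))).neg
  have hval1 : deriv (dC Q0 Q1) s = -(auxG1 Q0 Q1 s / auxG Q0 Q1 s) := (hD1 s).deriv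
  have hval2 : deriv (deriv (dC Q0 Q1)) s
      = -((auxG2 Q0 Q1 s * auxG Q0 Q1 s - auxG1 Q0 Q1 s * auxG1 Q0 Q1 s) / auxG Q0 Q1 s ^ 2) :=
    hD2.deriv
  -- bound on |g1|
  have hb1 : |auxG1 Q0 Q1 s| ≤ L * auxG Q0 Q1 s := by
    calc |auxG1 Q0 Q1 s|
        ≤ ∑ x, |auxW Q0 Q1 x * auxC Q0 Q1 x * Real.exp (s * auxC Q0 Q1 x)| :=
          Finset.abs_sum_le_sum_abs _ _
      _ ≤ ∑ x, auxW Q0 Q1 x * L * Real.exp (s * auxC Q0 Q1 x) := by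
          refine Finset.sum_le_sum fun x _ => ?_
          by_cases hw : auxW Q0 Q1 x = 0
          · simp [hw]
          · have hwn := auxW_nonneg Q0 Q1 hp0 x
            rw [abs_mul, abs_mul, abs_of_nonneg hwn,
              abs_of_nonneg (Real.exp_nonneg _)]
            exact mul_le_mul_of_nonneg_right
              (mul_le_mul_of_nonneg_left (hcb x hw) hwn) (Real.exp_nonneg _)
      _ = L * auxG Q0 Q1 s := by
          unfold auxG; rw [Finset.mul_sum]; exact Finset.sum_congr rfl fun x _ => by ring
  -- bound on g2
  have hb2 : auxG2 Q0 Q1 s ≤ L ^ 2 * auxG Q0 Q1 s := by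
    calc auxG2 Q0 Q1 s
        ≤ ∑ x, auxW Q0 Q1 x * L ^ 2 * Real.exp (s * auxC Q0 Q1 x) := by
          refine Finset.sum_le_sum fun x _ => ?_
          by_cases hw : auxW Q0 Q1 x = 0
          · simp [hw]
          · have hwn := auxW_nonneg Q0 Q1 hp0 x
            have hc2 : auxC Q0 Q1 x ^ 2 ≤ L ^ 2 := by
              have := hcb x hw
              rw [abs_le] at this
              nlinarith [this.1, this.2]
            exact mul_le_mul_of_nonneg_right
              (mul_le_mul_of_nonneg_left hc2 hwn) (Real.exp_nonneg _)
      _ = L ^ 2 * auxG Q0 Q1 s := by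
          unfold auxG; rw [Finset.mul_sum]; exact Finset.sum_congr rfl fun x _ => by ring
  -- Cauchy–Schwarz
  have hcs : auxG1 Q0 Q1 s ^ 2 ≤ auxG Q0 Q1 s * auxG2 Q0 Q1 s := by
    have key := Finset.sum_mul_sq_le_sq_mul_sq Finset.univ
      (fun x => Real.sqrt (auxW Q0 Q1 x * Real.exp (s * auxC Q0 Q1 x)))
      (fun x => Real.sqrt (auxW Q0 Q1 x * Real.exp (s * auxC Q0 Q1 x)) * auxC Q0 Q1 x)
    have hsq : ∀ x, Real.sqrt (auxW Q0 Q1 x * Real.exp (s * auxC Q0 Q1 x)) ^ 2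
        = auxW Q0 Q1 x * Real.exp (s * auxC Q0 Q1 x) := fun x =>
      Real.sq_sqrt (mul_nonneg (auxW_nonneg Q0 Q1 hp0 x) (Real.exp_nonneg _))
    have e1 : (∑ x, Real.sqrt (auxW Q0 Q1 x * Real.exp (s * auxC Q0 Q1 x)) *
        (Real.sqrt (auxW Q0 Q1 x * Real.exp (s * auxC Q0 Q1 x)) * auxC Q0 Q1 x))
        = auxG1 Q0 Q1 s := by
      unfold auxG1
      refine Finset.sum_congr rfl fun x _ => ?_
      linear_combination auxC Q0 Q1 x * hsq x
    have e2 : (∑ x, Real.sqrt (auxW Q0 Q1 x * Real.exp (s * auxC Q0 Q1 x)) ^ 2)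
        = auxG Q0 Q1 s := by
      unfold auxG; exact Finset.sum_congr rfl fun x _ => hsq x
    have e3 : (∑ x, (Real.sqrt (auxW Q0 Q1 x * Real.exp (s * auxC Q0 Q1 x)) * auxC Q0 Q1 x) ^ 2)
        = auxG2 Q0 Q1 s := by
      unfold auxG2
      refine Finset.sum_congr rfl fun x _ => ?_
      rw [mul_pow, hsq x]; ring
    rw [e1, e2, e3] at key
    exact key
  refine ⟨?_, ?_, ?_⟩
  · show |deriv (dC Q0 Q1) s| ≤ L
    rw [hval1, abs_neg, abs_div, abs_of_pos (hpos s), div_le_iff₀ (hpos s)]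
    exact hb1
  · show 0 ≤ -deriv (deriv (dC Q0 Q1)) s
    rw [hval2, neg_neg]
    apply div_nonneg _ (sq_nonneg _)
    nlinarith [hcs]
  · show -deriv (deriv (dC Q0 Q1)) s ≤ L ^ 2
    rw [hval2, neg_neg, div_le_iff₀ (pow_pos (hpos s) 2)]
    nlinarith [hb2, hpos s, mul_self_nonneg (auxG1 Q0 Q1 s)]

end
end

section
/- Let Q be a discrete memoryless channel with finite input and output alphabets, let p_min be its smallest nonzero transition probability, let w⃗_0, w⃗_1 be input strings of length n such that for every i the distributions Q(·|w⃗_0^{(i)}) and Q(·|w⃗_1^{(i)}) have a common support point, and let D_0, D_1 be a partition of the n-fold output alphabet. Define p_{e,0} = Q^n(D_1 | w⃗_0) and p_{e,1} = Q^n(D_0 | w⃗_1). Then for any s ∈ [0,1], at least one of the following holds: (a) −log p_{e,0} ≤ d_C(w⃗_0, w⃗_1, Q^n, s) − s·d_C'(w⃗_0, w⃗_1, Q^n, s) + √(2n)·log(1/p_min) + log 4; (b) −log p_{e,1} ≤ d_C(w⃗_0, w⃗_1, Q^n, s) + (1−s)·d_C'(w⃗_0, w⃗_1, Q^n, s) +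 √(2n)·log(1/p_min) + log 4. -/
open scoped BigOperators
open Finset

noncomputable section

namespace SGB

open scoped Classical

variable {α : Type*} [Fintype α]

def cS (p q : α → ℝ) : Finset α := Finset.univ.filter (fun x => p x ≠ 0 ∧ q x ≠ 0)

def llr (p q : α → ℝ) (x : α) : ℝ := Real.log (q x) - Real.log (p x)

def Ff (p q : α → ℝ) (s : ℝ) : ℝ := ∑ x ∈ cS p q, p x * Real.exp (s * llr p q x)
def Gf (p q : α → ℝ) (s : ℝ) : ℝ :=
  ∑ x ∈ cS p q, p x * llr p q x * Real.exp (s * llr p q x)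
def Hf (p q : α → ℝ) (s : ℝ) : ℝ :=
  ∑ x ∈ cS p q, p x * (llr p q x) ^ 2 * Real.exp (s * llr p q x)

variable {p q : α → ℝ}

lemma cherSum_eq (hp : ∀ x, 0 ≤ p x) (hq : ∀ x, 0 ≤ q x) (s : ℝ) :
    cherSum p q s = Ff p q s := by
  rw [cherSum, Ff, cS, Finset.sum_filter]
  refine Finset.sum_congr rfl fun x _ => ?_
  by_cases h : p x = 0 ∨ q x = 0
  · rw [if_pos h, if_neg (by tauto)]
  · push_neg at h
    rw [if_neg (by tauto), if_pos h]
    have hp' : 0 < p x := (hp x).lt_of_ne (Ne.symm h.1)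
    have hq' : 0 < q x := (hq x).lt_of_ne (Ne.symm h.2)
    rw [Real.rpow_def_of_pos hp', Real.rpow_def_of_pos hq']
    conv_rhs => rw [← Real.exp_log hp']
    rw [← Real.exp_add, ← Real.exp_add, llr]
    congr 1
    ring

lemma Ff_pos (hp : ∀ x, 0 ≤ p x) (hne : ∃ x, p x ≠ 0 ∧ q x ≠ 0) (s : ℝ) :
    0 < Ff p q s := by
  obtain ⟨x₀, hx₀⟩ := hne
  have hx₀m : x₀ ∈ cS p q := by simp [cS, hx₀.1, hx₀.2]
  refine Finset.sum_pos' (fun x _ => mul_nonneg (hp x) (Real.exp_pos _).le) ⟨x₀, hx₀m, ?_⟩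
  have : 0 < p x₀ := (hp x₀).lt_of_ne (Ne.symm hx₀.1)
  exact mul_pos this (Real.exp_pos _)

lemma hasDerivAt_Ff (s : ℝ) : HasDerivAt (Ff p q) (Gf p q s) s := by
  have : HasDerivAt (fun u => ∑ x ∈ cS p q, p x * Real.exp (u * llr p q x))
      (∑ x ∈ cS p q, p x * (Real.exp (s * llr p q x) * llr p q x)) s := by
    refine HasDerivAt.fun_sum fun x _ => ?_
    exact ((Real.hasDerivAt_exp (s * llr p q x)).comp s
      (hasDerivAt_mul_const (llr p q x))).const_mul (p x)
  convert this using 1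
  · rfl
  rw [Gf]; exact Finset.sum_congr rfl fun x _ => by ring

lemma hasDerivAt_Gf (s : ℝ) : HasDerivAt (Gf p q) (Hf p q s) s := by
  have : HasDerivAt (fun u => ∑ x ∈ cS p q, p x * llr p q x * Real.exp (u * llr p q x))
      (∑ x ∈ cS p q, p x * llr p q x * (Real.exp (s * llr p q x) * llr p q x)) s := by
    refine HasDerivAt.fun_sum fun x _ => ?_
    exact ((Real.hasDerivAt_exp (s * llr p q x)).comp s
      (hasDerivAt_mul_const (llr p q x))).const_mul (p x * llr p q x)
  convert this using 1
  · rfl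
  rw [Hf]; exact Finset.sum_congr rfl fun x _ => by ring

lemma dC_eq (hp : ∀ x, 0 ≤ p x) (hq : ∀ x, 0 ≤ q x) :
    dC p q = fun s => - Real.log (Ff p q s) := by
  funext s; rw [dC, cherSum_eq hp hq]

lemma hasDerivAt_dC (hp : ∀ x, 0 ≤ p x) (hq : ∀ x, 0 ≤ q x)
    (hne : ∃ x, p x ≠ 0 ∧ q x ≠ 0) (s : ℝ) :
    HasDerivAt (dC p q) (-(Gf p q s / Ff p q s)) s := by
  rw [dC_eq hp hq]
  have h := ((Real.hasDerivAt_log (Ff_pos hp hne s).ne').comp s (hasDerivAt_Ff s)).neg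
  convert h using 1
  · rfl
  · rfl
  · rfl
  rw [div_eq_inv_mul]

lemma dC'_eq (hp : ∀ x, 0 ≤ p x) (hq : ∀ x, 0 ≤ q x)
    (hne : ∃ x, p x ≠ 0 ∧ q x ≠ 0) (s : ℝ) :
    dC' p q s = -(Gf p q s / Ff p q s) :=
  (hasDerivAt_dC hp hq hne s).deriv

lemma hasDerivAt_GF (hp : ∀ x, 0 ≤ p x) (hne : ∃ x, p x ≠ 0 ∧ q x ≠ 0) (s : ℝ) :
    HasDerivAt (fun u => Gf p q u / Ff p q u)
      (Hf p q s / Ff p q s - (Gf p q s / Ff p q s) ^ 2) s := by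
  have hF := Ff_pos hp hne s
  have h := (hasDerivAt_Gf (p := p) (q := q) s).div (hasDerivAt_Ff s) hF.ne'
  convert h using 1
  · rfl
  · rfl
  · rfl
  field_simp

lemma sumSq (hp : ∀ x, 0 ≤ p x) (hne : ∃ x, p x ≠ 0 ∧ q x ≠ 0) (s : ℝ) :
    ∑ x ∈ cS p q, p x * Real.exp (s * llr p q x) *
        (llr p q x - Gf p q s / Ff p q s) ^ 2
      = (Hf p q s / Ff p q s - (Gf p q s / Ff p q s) ^ 2) * Ff p q s := by
  have hF := (Ff_pos hp hne s).ne'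
  set m := Gf p q s / Ff p q s with hm
  have : ∑ x ∈ cS p q, p x * Real.exp (s * llr p q x) * (llr p q x - m) ^ 2
      = Hf p q s - 2 * m * Gf p q s + m ^ 2 * Ff p q s := by
    rw [Hf, Gf, Ff, Finset.mul_sum, Finset.mul_sum, ← Finset.sum_sub_distrib,
      ← Finset.sum_add_distrib]
    exact Finset.sum_congr rfl fun x _ => by ring
  rw [this, hm]
  field_simp
  ring

lemma var_nonneg (hp : ∀ x, 0 ≤ p x) (hne : ∃ x, p x ≠ 0 ∧ q x ≠ 0) (s : ℝ) :
    0 ≤ Hf p q s / Ff p q s - (Gf p q s / Ff p q s) ^ 2 := by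
  have hF := Ff_pos hp hne s
  have h := sumSq hp hne s
  have hnn : 0 ≤ ∑ x ∈ cS p q, p x * Real.exp (s * llr p q x) *
      (llr p q x - Gf p q s / Ff p q s) ^ 2 :=
    Finset.sum_nonneg fun x _ =>
      mul_nonneg (mul_nonneg (hp x) (Real.exp_pos _).le) (sq_nonneg _)
  nlinarith

lemma cherSum_prod {X Y : Type*} [Fintype Y] {n : ℕ} (Q : X → Y → ℝ)
    (hQ : ∀ x y, 0 ≤ Q x y) (w0 w1 : Fin n → X) (s : ℝ) :
    cherSum (prodDist Q w0) (prodDist Q w1) s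
      = ∏ i, cherSum (Q (w0 i)) (Q (w1 i)) s := by
  unfold cherSum
  rw [Finset.prod_univ_sum, Fintype.piFinset_univ]
  refine Finset.sum_congr rfl fun x _ => ?_
  by_cases hz : ∀ i, Q (w0 i) (x i) ≠ 0 ∧ Q (w1 i) (x i) ≠ 0
  · have h0 : prodDist Q w0 x ≠ 0 := Finset.prod_ne_zero_iff.mpr fun i _ => (hz i).1
    have h1 : prodDist Q w1 x ≠ 0 := Finset.prod_ne_zero_iff.mpr fun i _ => (hz i).2
    rw [if_neg (by tauto), Finset.prod_congr rfl
      (fun i _ => if_neg (not_or.mpr ⟨(hz i).1, (hz i).2⟩))]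
    unfold prodDist
    rw [← Real.finset_prod_rpow _ _ (fun i _ => hQ (w0 i) (x i)) (1 - s),
      ← Real.finset_prod_rpow _ _ (fun i _ => hQ (w1 i) (x i)) s,
      ← Finset.prod_mul_distrib]
  · rw [not_forall] at hz
    obtain ⟨i, hi⟩ := hz
    rw [not_and_or, not_ne_iff, not_ne_iff] at hi
    have hL : prodDist Q w0 x = 0 ∨ prodDist Q w1 x = 0 := by
      rcases hi with hi | hi
      · exact Or.inl (Finset.prod_eq_zero (Finset.mem_univ i) hi)
      · exact Or.inr (Finset.prod_eq_zero (Finset.mem_univ i) hi)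
    rw [if_pos hL, eq_comm]
    exact Finset.prod_eq_zero (Finset.mem_univ i) (if_pos hi)

end SGB

set_option maxHeartbeats 1000000 in
/-- Lemma 7 of the paper: Shannon–Gallager–Berlekamp bound for DMCs. -/
theorem sgb_dmc {X Y : Type*} [Fintype X] [Fintype Y] {n : ℕ}
    (Q : X → Y → ℝ) (hQ : IsChannel Q)
    (pmin : ℝ) (hpmin : MinTransChan Q pmin)
    (w0 w1 : Fin n → X)
    (hsupp : ∀ i, CommonSupport (Q (w0 i)) (Q (w1 i)))
    (D0 D1 : Finset (Fin n → Y)) (hdisj : Disjoint D0 D1)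
    (hcover : ∀ x, x ∈ D0 ∨ x ∈ D1)
    (s : ℝ) (hs : s ∈ Set.Icc (0 : ℝ) 1) :
    (- Real.log (∑ z ∈ D1, prodDist Q w0 z) ≤
        dC (prodDist Q w0) (prodDist Q w1) s -
          s * dC' (prodDist Q w0) (prodDist Q w1) s +
          Real.sqrt (2 * n) * Real.log (1 / pmin) + Real.log 4) ∨
    (- Real.log (∑ z ∈ D0, prodDist Q w1 z) ≤
        dC (prodDist Q w0) (prodDist Q w1) s +
          (1 - s) * dC' (prodDist Q w0) (prodDist Q w1) s +
          Real.sqrt (2 * n) * Real.log (1 / pmin) + Real.log 4) := by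
  classical
  obtain ⟨hs0, hs1⟩ := hs
  have hQnn : ∀ x y, 0 ≤ Q x y := fun x y => (hQ x).1 y
  set p := prodDist Q w0 with hpdef
  set q := prodDist Q w1 with hqdef
  have hp : ∀ x, 0 ≤ p x := fun x => Finset.prod_nonneg fun i _ => hQnn _ _
  have hq : ∀ x, 0 ≤ q x := fun x => Finset.prod_nonneg fun i _ => hQnn _ _
  have hne : ∃ x, p x ≠ 0 ∧ q x ≠ 0 := by
    choose f hf1 hf2 using hsupp
    exact ⟨f, Finset.prod_ne_zero_iff.mpr fun i _ => hf1 i,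
      Finset.prod_ne_zero_iff.mpr fun i _ => hf2 i⟩
  have hpi : ∀ i : Fin n, ∀ y, 0 ≤ Q (w0 i) y := fun i y => hQnn _ _
  have hqi : ∀ i : Fin n, ∀ y, 0 ≤ Q (w1 i) y := fun i y => hQnn _ _
  set L := - Real.log pmin with hLdef
  have hpmin0 : 0 < pmin := hpmin.1
  have hle1 : ∀ x y, Q x y ≤ 1 := by
    intro x y
    calc Q x y ≤ ∑ y', Q x y' :=
          Finset.single_le_sum (fun y' _ => hQnn x y') (Finset.mem_univ y)
      _ = 1 := (hQ x).2
  have hpmin1 : pmin ≤ 1 := by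
    obtain ⟨x, y, hxy⟩ := hpmin.2.1
    have := hle1 x y
    linarith [hxy ▸ this]
  have hL0 : 0 ≤ L := by
    have := Real.log_nonpos hpmin0.le hpmin1
    linarith
  have hloginv : Real.log (1 / pmin) = L := by rw [one_div, Real.log_inv]
  have hllr : ∀ (i : Fin n), ∀ y ∈ SGB.cS (Q (w0 i)) (Q (w1 i)),
      |SGB.llr (Q (w0 i)) (Q (w1 i)) y| ≤ L := by
    intro i y hy
    rw [SGB.cS, Finset.mem_filter] at hy
    obtain ⟨-, h0, h1⟩ := hy
    have l1 : Real.log pmin ≤ Real.log (Q (w0 i) y) :=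
      Real.log_le_log hpmin0 (hpmin.2.2 _ _ h0)
    have l2 : Real.log (Q (w0 i) y) ≤ 0 := Real.log_nonpos (hQnn _ _) (hle1 _ _)
    have l3 : Real.log pmin ≤ Real.log (Q (w1 i) y) :=
      Real.log_le_log hpmin0 (hpmin.2.2 _ _ h1)
    have l4 : Real.log (Q (w1 i) y) ≤ 0 := Real.log_nonpos (hQnn _ _) (hle1 _ _)
    rw [SGB.llr, abs_le]
    constructor <;> [linarith; linarith]
  -- derivative decompositions
  have dC_sum : dC p q = fun u => ∑ i, dC (Q (w0 i)) (Q (w1 i)) u := by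
    funext u
    rw [dC, hpdef, hqdef, SGB.cherSum_prod Q hQnn w0 w1 u,
      Real.log_prod (fun i _ => by
        rw [SGB.cherSum_eq (hpi i) (hqi i)]
        exact (SGB.Ff_pos (hpi i) (hsupp i) u).ne')]
    rw [← Finset.sum_neg_distrib]
    exact Finset.sum_congr rfl fun i _ => rfl
  have hderivsum : ∀ u, HasDerivAt (dC p q)
      (∑ i, -(SGB.Gf (Q (w0 i)) (Q (w1 i)) u / SGB.Ff (Q (w0 i)) (Q (w1 i)) u)) u := by
    intro u
    rw [dC_sum]
    exact HasDerivAt.fun_sum fun i _ => SGB.hasDerivAt_dC (hpi i) (hqi i) (hsupp i) u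
  have GF_sum : ∀ u, SGB.Gf p q u / SGB.Ff p q u
      = ∑ i, SGB.Gf (Q (w0 i)) (Q (w1 i)) u / SGB.Ff (Q (w0 i)) (Q (w1 i)) u := by
    intro u
    have h3 := (SGB.hasDerivAt_dC hp hq hne u).unique (hderivsum u)
    rw [Finset.sum_neg_distrib] at h3
    exact neg_injective h3
  have Vsum : SGB.Hf p q s / SGB.Ff p q s - (SGB.Gf p q s / SGB.Ff p q s) ^ 2
      = ∑ i, (SGB.Hf (Q (w0 i)) (Q (w1 i)) s / SGB.Ff (Q (w0 i)) (Q (w1 i)) s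
          - (SGB.Gf (Q (w0 i)) (Q (w1 i)) s / SGB.Ff (Q (w0 i)) (Q (w1 i)) s) ^ 2) := by
    have h2 : HasDerivAt (fun u => ∑ i,
        SGB.Gf (Q (w0 i)) (Q (w1 i)) u / SGB.Ff (Q (w0 i)) (Q (w1 i)) u)
        (∑ i, (SGB.Hf (Q (w0 i)) (Q (w1 i)) s / SGB.Ff (Q (w0 i)) (Q (w1 i)) s
          - (SGB.Gf (Q (w0 i)) (Q (w1 i)) s / SGB.Ff (Q (w0 i)) (Q (w1 i)) s) ^ 2)) s :=
      HasDerivAt.fun_sum fun i _ => SGB.hasDerivAt_GF (hpi i) (hsupp i) s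
    have heq : (fun u => SGB.Gf p q u / SGB.Ff p q u) = fun u => ∑ i,
        SGB.Gf (Q (w0 i)) (Q (w1 i)) u / SGB.Ff (Q (w0 i)) (Q (w1 i)) u := funext GF_sum
    rw [← heq] at h2
    exact (SGB.hasDerivAt_GF hp hne s).unique h2
  have Vi_le : ∀ i : Fin n,
      SGB.Hf (Q (w0 i)) (Q (w1 i)) s / SGB.Ff (Q (w0 i)) (Q (w1 i)) s
        - (SGB.Gf (Q (w0 i)) (Q (w1 i)) s / SGB.Ff (Q (w0 i)) (Q (w1 i)) s) ^ 2
      ≤ L ^ 2 := by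
    intro i
    have hF := SGB.Ff_pos (hpi i) (hsupp i) s
    have hH : SGB.Hf (Q (w0 i)) (Q (w1 i)) s ≤ L ^ 2 * SGB.Ff (Q (w0 i)) (Q (w1 i)) s := by
      rw [SGB.Hf, SGB.Ff, Finset.mul_sum]
      refine Finset.sum_le_sum fun y hy => ?_
      have hsq : (SGB.llr (Q (w0 i)) (Q (w1 i)) y) ^ 2 ≤ L ^ 2 := by
        calc (SGB.llr (Q (w0 i)) (Q (w1 i)) y) ^ 2
            = |SGB.llr (Q (w0 i)) (Q (w1 i)) y| ^ 2 := (sq_abs _).symm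
          _ ≤ L ^ 2 := pow_le_pow_left₀ (abs_nonneg _) (hllr i y hy) 2
      have hnn := mul_nonneg (hpi i y)
        (Real.exp_pos (s * SGB.llr (Q (w0 i)) (Q (w1 i)) y)).le
      nlinarith [hnn, hsq]
    have hd : SGB.Hf (Q (w0 i)) (Q (w1 i)) s / SGB.Ff (Q (w0 i)) (Q (w1 i)) s ≤ L ^ 2 := by
      rw [div_le_iff₀ hF]; linarith
    nlinarith [sq_nonneg (SGB.Gf (Q (w0 i)) (Q (w1 i)) s / SGB.Ff (Q (w0 i)) (Q (w1 i)) s)]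
  -- main quantities
  set S := SGB.cS p q with hSdef
  set Fs := SGB.Ff p q s with hFsdef
  set m := SGB.Gf p q s / Fs with hmdef
  set V := SGB.Hf p q s / Fs - m ^ 2 with hVdef
  set t := Real.sqrt (2 * V) with htdef
  have hFpos : 0 < Fs := SGB.Ff_pos hp hne s
  have hV0 : 0 ≤ V := SGB.var_nonneg hp hne s
  have hVn : V ≤ (n : ℝ) * L ^ 2 := by
    rw [Vsum]
    calc (∑ i, (SGB.Hf (Q (w0 i)) (Q (w1 i)) s / SGB.Ff (Q (w0 i)) (Q (w1 i)) s
          - (SGB.Gf (Q (w0 i)) (Q (w1 i)) s / SGB.Ff (Q (w0 i)) (Q (w1 i)) s) ^ 2))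
        ≤ ∑ _i : Fin n, L ^ 2 := Finset.sum_le_sum fun i _ => Vi_le i
      _ = (n : ℝ) * L ^ 2 := by
          rw [Finset.sum_const, Finset.card_univ, Fintype.card_fin, nsmul_eq_mul]
  have ht0 : 0 ≤ t := Real.sqrt_nonneg _
  have ht : t ≤ Real.sqrt (2 * n) * L := by
    calc t ≤ Real.sqrt (2 * n * L ^ 2) := Real.sqrt_le_sqrt (by linarith)
      _ = Real.sqrt (2 * n) * L := by
          rw [Real.sqrt_mul (by positivity), Real.sqrt_sq hL0]
  -- weights
  set w : (Fin n → Y) → ℝ := fun x => p x * Real.exp (s * SGB.llr p q x) with hwdef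
  have hwnn : ∀ x, 0 ≤ w x := fun x => mul_nonneg (hp x) (Real.exp_pos _).le
  have hFsum : ∑ x ∈ S, w x = Fs := rfl
  set A := S.filter (fun x => |SGB.llr p q x - m| ≤ t) with hAdef
  have hAS : A ⊆ S := Finset.filter_subset _ _
  have hsumSq : ∑ x ∈ S, w x * (SGB.llr p q x - m) ^ 2 = V * Fs := SGB.sumSq hp hne s
  -- Chebyshev
  have hA : Fs / 2 ≤ ∑ x ∈ A, w x := by
    have hsplit : ∑ x ∈ S \ A, w x + ∑ x ∈ A, w x = Fs := by
      rw [Finset.sum_sdiff hAS]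
      exact hFsum
    suffices hrest : ∑ x ∈ S \ A, w x ≤ Fs / 2 by linarith
    have h2 : ∑ x ∈ S \ A, w x * (SGB.llr p q x - m) ^ 2
        ≤ ∑ x ∈ S, w x * (SGB.llr p q x - m) ^ 2 :=
      Finset.sum_le_sum_of_subset_of_nonneg (Finset.sdiff_subset)
        (fun x _ _ => mul_nonneg (hwnn x) (sq_nonneg _))
    have hmem : ∀ x ∈ S \ A, t < |SGB.llr p q x - m| := by
      intro x hx
      rw [Finset.mem_sdiff] at hx
      have := hx.2
      rw [hAdef, Finset.mem_filter] at this
      push_neg at this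
      exact this hx.1
    rcases eq_or_lt_of_le hV0 with hV | hV
    · have hz : ∀ x ∈ S \ A, w x = 0 := by
        intro x hx
        have hterm : w x * (SGB.llr p q x - m) ^ 2 = 0 := by
          have hall : ∑ x ∈ S, w x * (SGB.llr p q x - m) ^ 2 = 0 := by
            rw [hsumSq, ← hV]; ring
          have := (Finset.sum_eq_zero_iff_of_nonneg
            (fun x _ => mul_nonneg (hwnn x) (sq_nonneg _))).mp hall
          exact this x (Finset.mem_sdiff.mp hx).1
        have habs : 0 < |SGB.llr p q x - m| := lt_of_le_of_lt ht0 (hmem x hx)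
        have hd : SGB.llr p q x - m ≠ 0 := by
          intro h0; rw [h0] at habs; simp at habs
        have hpos : 0 < (SGB.llr p q x - m) ^ 2 := by positivity
        rcases mul_eq_zero.mp hterm with h | h
        · exact h
        · exact absurd h hpos.ne'
      rw [Finset.sum_eq_zero hz]
      positivity
    · have hkey : ∀ x ∈ S \ A, 2 * V * w x ≤ w x * (SGB.llr p q x - m) ^ 2 := by
        intro x hx
        have h := hmem x hx
        have h2V : 2 * V ≤ (SGB.llr p q x - m) ^ 2 := by
          have h2 : t ^ 2 ≤ |SGB.llr p q x - m| ^ 2 :=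
            pow_le_pow_left₀ ht0 h.le 2
          rw [sq_abs] at h2
          rw [htdef, Real.sq_sqrt (by linarith : (0:ℝ) ≤ 2 * V)] at h2
          exact h2
        nlinarith [hwnn x]
      have h1 : 2 * V * ∑ x ∈ S \ A, w x
          ≤ ∑ x ∈ S \ A, w x * (SGB.llr p q x - m) ^ 2 := by
        rw [Finset.mul_sum]
        exact Finset.sum_le_sum hkey
      have hw0 : 0 ≤ ∑ x ∈ S \ A, w x := Finset.sum_nonneg fun x _ => hwnn x
      nlinarith [h1, h2, hsumSq, hFpos]
  -- split over D0 / D1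
  set A1 := A.filter (fun x => x ∈ D1) with hA1def
  set A0 := A.filter (fun x => x ∉ D1) with hA0def
  have hsplitA : ∑ x ∈ A1, w x + ∑ x ∈ A0, w x = ∑ x ∈ A, w x :=
    Finset.sum_filter_add_sum_filter_not A _ w
  have hAprop : ∀ x ∈ A, x ∈ S ∧ |SGB.llr p q x - m| ≤ t := by
    intro x hx
    rw [hAdef, Finset.mem_filter] at hx
    exact hx
  have hcases : Fs / 4 ≤ ∑ x ∈ A1, w x ∨ Fs / 4 ≤ ∑ x ∈ A0, w x := by
    by_contra h
    push_neg at h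
    linarith [h.1, h.2]
  -- facts on S
  have hmemS : ∀ x ∈ S, p x ≠ 0 ∧ q x ≠ 0 := by
    intro x hx
    rw [hSdef, SGB.cS, Finset.mem_filter] at hx
    exact hx.2
  have hdC : dC p q s = - Real.log Fs := by
    rw [dC, SGB.cherSum_eq hp hq, hFsdef]
  have hdC' : dC' p q s = -m := by
    rw [SGB.dC'_eq hp hq hne, hmdef, hFsdef]
  rcases hcases with hcase | hcase
  · -- error of first kind bound
    left
    have hPA : ∀ x ∈ A1, w x * Real.exp (-(s * (m + t))) ≤ p x := by
      intro x hx
      have hxA : x ∈ A := Finset.mem_of_mem_filter x hx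
      obtain ⟨hxS, habs⟩ := hAprop x hxA
      have hub : SGB.llr p q x ≤ m + t := by
        have := (abs_le.mp habs).2; linarith
      have hmono : Real.exp (-(s * (m + t))) ≤ Real.exp (-(s * SGB.llr p q x)) := by
        apply Real.exp_le_exp.mpr
        have := mul_le_mul_of_nonneg_left hub hs0
        linarith
      calc w x * Real.exp (-(s * (m + t)))
          ≤ w x * Real.exp (-(s * SGB.llr p q x)) :=
            mul_le_mul_of_nonneg_left hmono (hwnn x)
        _ = p x := by
            rw [hwdef]
            simp only
            rw [mul_assoc, ← Real.exp_add]
            simp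
    have hA1D1 : A1 ⊆ D1 := fun x hx => (Finset.mem_filter.mp hx).2
    have hlow : Fs / 4 * Real.exp (-(s * (m + t))) ≤ ∑ z ∈ D1, p z := by
      calc Fs / 4 * Real.exp (-(s * (m + t)))
          ≤ (∑ x ∈ A1, w x) * Real.exp (-(s * (m + t))) := by
            apply mul_le_mul_of_nonneg_right hcase (Real.exp_pos _).le
        _ = ∑ x ∈ A1, w x * Real.exp (-(s * (m + t))) := by rw [Finset.sum_mul]
        _ ≤ ∑ x ∈ A1, p x := Finset.sum_le_sum hPA
        _ ≤ ∑ z ∈ D1, p z :=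
            Finset.sum_le_sum_of_subset_of_nonneg hA1D1 (fun x _ _ => hp x)
    have hpos : (0:ℝ) < Fs / 4 * Real.exp (-(s * (m + t))) := by positivity
    have hlog := Real.log_le_log hpos hlow
    have hexpand : Real.log (Fs / 4 * Real.exp (-(s * (m + t))))
        = Real.log Fs - Real.log 4 + (-(s * (m + t))) := by
      rw [Real.log_mul (by positivity) (Real.exp_ne_zero _), Real.log_exp,
        Real.log_div hFpos.ne' (by norm_num)]
    rw [hexpand] at hlog
    rw [hdC, hdC', hloginv]
    have hst : s * t ≤ Real.sqrt (2 * n) * L := by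
      calc s * t ≤ 1 * t := mul_le_mul_of_nonneg_right hs1 ht0
        _ = t := one_mul t
        _ ≤ Real.sqrt (2 * n) * L := ht
    have hring : s * (m + t) = s * m + s * t := by ring
    linarith [hlog, hst]
  · -- error of second kind bound
    right
    have hA0D0 : A0 ⊆ D0 := by
      intro x hx
      have := (Finset.mem_filter.mp hx).2
      rcases hcover x with h | h
      · exact h
      · exact absurd h this
    have hQA : ∀ x ∈ A0, w x * Real.exp ((1 - s) * (m - t)) ≤ q x := by
      intro x hx
      have hxA : x ∈ A := Finset.mem_of_mem_filter x hx
      obtain ⟨hxS, habs⟩ := hAprop x hxA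
      obtain ⟨hpne, hqne⟩ := hmemS x hxS
      have hlb : m - t ≤ SGB.llr p q x := by
        have := (abs_le.mp habs).1; linarith
      have hmono : Real.exp ((1 - s) * (m - t)) ≤ Real.exp ((1 - s) * SGB.llr p q x) := by
        apply Real.exp_le_exp.mpr
        exact mul_le_mul_of_nonneg_left hlb (by linarith)
      have hqeq : q x = w x * Real.exp ((1 - s) * SGB.llr p q x) := by
        have hppos : 0 < p x := (hp x).lt_of_ne (Ne.symm hpne)
        have hqpos : 0 < q x := (hq x).lt_of_ne (Ne.symm hqne)
        rw [hwdef]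
        simp only
        rw [mul_assoc, ← Real.exp_add]
        have harg : s * SGB.llr p q x + (1 - s) * SGB.llr p q x = SGB.llr p q x := by ring
        rw [harg, SGB.llr]
        rw [Real.exp_sub, Real.exp_log hqpos, Real.exp_log hppos]
        field_simp
      calc w x * Real.exp ((1 - s) * (m - t))
          ≤ w x * Real.exp ((1 - s) * SGB.llr p q x) :=
            mul_le_mul_of_nonneg_left hmono (hwnn x)
        _ = q x := hqeq.symm
    have hlow : Fs / 4 * Real.exp ((1 - s) * (m - t)) ≤ ∑ z ∈ D0, q z := by
      calc Fs / 4 * Real.exp ((1 - s) * (m - t))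
          ≤ (∑ x ∈ A0, w x) * Real.exp ((1 - s) * (m - t)) := by
            apply mul_le_mul_of_nonneg_right hcase (Real.exp_pos _).le
        _ = ∑ x ∈ A0, w x * Real.exp ((1 - s) * (m - t)) := by rw [Finset.sum_mul]
        _ ≤ ∑ x ∈ A0, q x := Finset.sum_le_sum hQA
        _ ≤ ∑ z ∈ D0, q z :=
            Finset.sum_le_sum_of_subset_of_nonneg hA0D0 (fun x _ _ => hq x)
    have hpos : (0:ℝ) < Fs / 4 * Real.exp ((1 - s) * (m - t)) := by positivity
    have hlog := Real.log_le_log hpos hlow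
    have hexpand : Real.log (Fs / 4 * Real.exp ((1 - s) * (m - t)))
        = Real.log Fs - Real.log 4 + ((1 - s) * (m - t)) := by
      rw [Real.log_mul (by positivity) (Real.exp_ne_zero _), Real.log_exp,
        Real.log_div hFpos.ne' (by norm_num)]
    rw [hexpand] at hlog
    rw [hdC, hdC', hloginv]
    have hst : (1 - s) * t ≤ Real.sqrt (2 * n) * L := by
      calc (1 - s) * t ≤ 1 * t := mul_le_mul_of_nonneg_right (by linarith) ht0
        _ = t := one_mul t
        _ ≤ Real.sqrt (2 * n) * L := ht
    have hring : (1 - s) * (m - t) = (1 - s) * m - (1 - s) * t := by ring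
    linarith [hlog, hst]


end
end

section
/- Let Q be a discrete memoryless channel with finite input and output alphabets, let p_min be its smallest nonzero transition probability, let w⃗_0, w⃗_1 be input strings of length n such that for every i the distributions Q(·|w⃗_0^{(i)}) and Q(·|w⃗_1^{(i)}) have a common support point, and let D_0, D_1 be a partition of the n-fold output alphabet. Define p_{e,0} = Q^n(D_1 | w⃗_0) and p_{e,1} = Q^n(D_0 | w⃗_1). Then −log(p_{e,0} + p_{e,1}) ≤ max_{0≤s≤1} d_C(w⃗_0, w⃗_1, Q^n, s) + √(2n)·log(1/p_min) + log 4. -/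
open scoped BigOperators
open Finset

noncomputable section

lemma sum_prod_eval {n : ℕ} {Y : Type*} [Fintype Y] (f : Fin n → Y → ℝ) :
    ∑ z : Fin n → Y, ∏ k, f k (z k) = ∏ k, ∑ y, f k y := by
  rw [Finset.prod_univ_sum]
  rw [Fintype.piFinset_univ]

lemma expect_two {n : ℕ} {Y : Type*} [Fintype Y] (w : Fin n → Y → ℝ)
    (hw : ∀ k, ∑ y, w k y = 1) (A B : Y → ℝ) (i j : Fin n) :
    ∑ z : Fin n → Y, (∏ k, w k (z k)) * (A (z i) * B (z j)) =
      if i = j then ∑ y, w i y * (A y * B y)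
      else (∑ y, w i y * A y) * (∑ y, w j y * B y) := by
  have key : ∀ z : Fin n → Y, (∏ k, w k (z k)) * (A (z i) * B (z j)) =
      ∏ k, (w k (z k) * ((if i = k then A (z k) else 1) * (if j = k then B (z k) else 1))) := by
    intro z
    rw [Finset.prod_mul_distrib, Finset.prod_mul_distrib,
      Finset.prod_ite_eq univ i (fun k => A (z k)),
      Finset.prod_ite_eq univ j (fun k => B (z k))]
    simp
  simp_rw [key]
  rw [sum_prod_eval (f := fun k y => w k y * ((if i = k then A y else 1) * if j = k then B y else 1))]
  have hval : ∀ k, (∑ y, w k y * ((if i = k then A y else 1) * (if j = k then B y else 1)))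
      = if i = k then (if j = k then ∑ y, w k y * (A y * B y) else ∑ y, w k y * A y)
        else (if j = k then ∑ y, w k y * B y else 1) := by
    intro k
    by_cases h1 : i = k <;> by_cases h2 : j = k <;> simp [h1, h2, hw k, mul_assoc]
  simp_rw [hval]
  by_cases hij : i = j
  · subst hij
    have h2 : ∀ k : Fin n, (if i = k then if i = k then (∑ y, w k y * (A y * B y))
          else ∑ y, w k y * A y else if i = k then ∑ y, w k y * B y else 1)
        = (if i = k then ∑ y, w k y * (A y * B y) else 1) := fun k => by
      by_cases h : i = k <;> simp [h]
    simp_rw [h2]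
    rw [Finset.prod_ite_eq univ i (fun k => ∑ y, w k y * (A y * B y))]
    simp
  · have : ∀ k, (if i = k then (if j = k then ∑ y, w k y * (A y * B y) else ∑ y, w k y * A y)
        else (if j = k then ∑ y, w k y * B y else 1))
        = (if i = k then ∑ y, w k y * A y else 1) * (if j = k then ∑ y, w k y * B y else 1) := by
      intro k
      by_cases h1 : i = k <;> by_cases h2 : j = k <;> simp [h1, h2]
      exact absurd (h1 ▸ h2.symm) hij
    simp_rw [this]
    rw [Finset.prod_mul_distrib, Finset.prod_ite_eq univ i (fun k => ∑ y, w k y * A y),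
      Finset.prod_ite_eq univ j (fun k => ∑ y, w k y * B y)]
    simp [hij]

lemma min_exp_identity (A B s : ℝ) (hs0 : 0 ≤ s) (hs1 : s ≤ 1) :
    min A B = A * (1 - s) + B * s + -(max (s * (B - A)) (-(1 - s) * (B - A))) := by
  rcases le_total A B with h | h
  · rw [min_eq_left h, max_eq_left (by nlinarith)]; ring
  · rw [min_eq_right h, max_eq_right (by nlinarith)]; ring

lemma jensen_exp {α : Type*} [Fintype α] (w g : α → ℝ) (hw : ∀ x, 0 ≤ w x)
    (hw1 : ∑ x, w x = 1) :
    Real.exp (∑ x, w x * g x) ≤ ∑ x, w x * Real.exp (g x) := by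
  set E := ∑ x, w x * g x with hE
  have key : ∀ x, w x * (Real.exp E * (g x - E + 1)) ≤ w x * Real.exp (g x) := by
    intro x
    apply mul_le_mul_of_nonneg_left _ (hw x)
    have h1 : g x - E + 1 ≤ Real.exp (g x - E) := Real.add_one_le_exp _
    calc Real.exp E * (g x - E + 1) ≤ Real.exp E * Real.exp (g x - E) := by
          exact mul_le_mul_of_nonneg_left h1 (Real.exp_pos E).le
      _ = Real.exp (g x) := by rw [← Real.exp_add]; ring_nf
  have hsum : ∑ x, w x * (Real.exp E * (g x - E + 1)) =
      Real.exp E * ∑ x, (w x * g x - w x * E + w x) := by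
    rw [Finset.mul_sum]; exact Finset.sum_congr rfl fun x _ => by ring
  calc Real.exp E = ∑ x, w x * (Real.exp E * (g x - E + 1)) := by
        rw [hsum, Finset.sum_add_distrib, Finset.sum_sub_distrib, ← Finset.sum_mul, hw1, ← hE]
        ring
    _ ≤ ∑ x, w x * Real.exp (g x) := Finset.sum_le_sum (fun x _ => key x)

lemma expect_abs_le_sqrt {α : Type*} [Fintype α] (w h : α → ℝ) (hw : ∀ x, 0 ≤ w x)
    (hw1 : ∑ x, w x = 1) :
    ∑ x, w x * |h x| ≤ Real.sqrt (∑ x, w x * h x ^ 2) := by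
  rw [Real.le_sqrt (Finset.sum_nonneg fun x _ => mul_nonneg (hw x) (abs_nonneg _))
    (Finset.sum_nonneg fun x _ => mul_nonneg (hw x) (sq_nonneg _))]
  have := Finset.sum_mul_sq_le_sq_mul_sq univ (fun x => Real.sqrt (w x))
    (fun x => Real.sqrt (w x) * |h x|)
  calc (∑ x, w x * |h x|) ^ 2
      = (∑ x, Real.sqrt (w x) * (Real.sqrt (w x) * |h x|)) ^ 2 := by
        congr 1; apply Finset.sum_congr rfl; intro x _
        rw [← mul_assoc, Real.mul_self_sqrt (hw x)]
    _ ≤ (∑ x, Real.sqrt (w x) ^ 2) * ∑ x, (Real.sqrt (w x) * |h x|) ^ 2 := this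
    _ = (∑ x, w x) * ∑ x, w x * h x ^ 2 := by
        congr 1
        · exact Finset.sum_congr rfl fun x _ => Real.sq_sqrt (hw x)
        · exact Finset.sum_congr rfl fun x _ => by
            rw [mul_pow, Real.sq_sqrt (hw x), sq_abs]
    _ = ∑ x, w x * h x ^ 2 := by rw [hw1, one_mul]


/-- Corollary 1 of the paper. -/
theorem sgb_dmc_sum {X Y : Type*} [Fintype X] [Fintype Y] {n : ℕ}
    (Q : X → Y → ℝ) (hQ : IsChannel Q)
    (pmin : ℝ) (hpmin : MinTransChan Q pmin)
    (w0 w1 : Fin n → X)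
    (hsupp : ∀ i, CommonSupport (Q (w0 i)) (Q (w1 i)))
    (D0 D1 : Finset (Fin n → Y)) (hdisj : Disjoint D0 D1)
    (hcover : ∀ x, x ∈ D0 ∨ x ∈ D1) :
    - Real.log (∑ z ∈ D1, prodDist Q w0 z + ∑ z ∈ D0, prodDist Q w1 z) ≤
      sSup ((fun s : ℝ => dC (prodDist Q w0) (prodDist Q w1) s) '' Set.Icc 0 1) +
        Real.sqrt (2 * n) * Real.log (1 / pmin) + Real.log 4 := by
  classical
  obtain ⟨hpos, ⟨x0, y0, hxy0⟩, hple⟩ := hpmin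
  -- basic facts about pmin and c
  have hQnn : ∀ x y, 0 ≤ Q x y := fun x y => (hQ x).1 y
  have hQle1 : ∀ x y, Q x y ≤ 1 := by
    intro x y
    calc Q x y ≤ ∑ y', Q x y' := Finset.single_le_sum (fun y' _ => hQnn x y') (mem_univ y)
    _ = 1 := (hQ x).2
  have hpmin1 : pmin ≤ 1 := hxy0 ▸ hQle1 x0 y0
  set c : ℝ := Real.log (1 / pmin) with hc_def
  have hc : 0 ≤ c := Real.log_nonneg (one_le_one_div hpos hpmin1)
  -- P0, P1 and their positivity facts
  set P0 : (Fin n → Y) → ℝ := prodDist Q w0 with hP0_def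
  set P1 : (Fin n → Y) → ℝ := prodDist Q w1 with hP1_def
  have hP0nn : ∀ z, 0 ≤ P0 z := fun z => Finset.prod_nonneg fun i _ => hQnn _ _
  have hP1nn : ∀ z, 0 ≤ P1 z := fun z => Finset.prod_nonneg fun i _ => hQnn _ _
  -- log-likelihood ratio on the product space
  set L0 : (Fin n → Y) → ℝ := fun z => Real.log (P1 z) - Real.log (P0 z) with hL0_def
  -- G = cherSum in exponential form
  set G : ℝ → ℝ := fun s =>
    ∑ z, if P0 z = 0 ∨ P1 z = 0 then 0 else P0 z * Real.exp (s * L0 z) with hG_def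
  have hterm : ∀ (s : ℝ) z, ¬(P0 z = 0 ∨ P1 z = 0) →
      P0 z ^ (1 - s) * P1 z ^ s = P0 z * Real.exp (s * L0 z) := by
    intro s z h
    push_neg at h
    have h0 : 0 < P0 z := lt_of_le_of_ne (hP0nn z) (Ne.symm h.1)
    have h1 : 0 < P1 z := lt_of_le_of_ne (hP1nn z) (Ne.symm h.2)
    rw [Real.rpow_def_of_pos h0, Real.rpow_def_of_pos h1, ← Real.exp_add,
      ← Real.exp_log h0, ← Real.exp_add]
    congr 1
    simp only [hL0_def, Real.exp_log h0]
    ring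
  have hGcher : ∀ s, cherSum P0 P1 s = G s := by
    intro s
    apply Finset.sum_congr rfl
    intro z _
    by_cases h : P0 z = 0 ∨ P1 z = 0
    · rw [if_pos h, if_pos h]
    · rw [if_neg h, if_neg h, hterm s z h]
  -- common support point of the product
  have hz0 : ∃ z, P0 z ≠ 0 ∧ P1 z ≠ 0 := by
    refine ⟨fun i => (hsupp i).choose, ?_, ?_⟩
    · exact Finset.prod_ne_zero_iff.mpr fun i _ => (hsupp i).choose_spec.1
    · exact Finset.prod_ne_zero_iff.mpr fun i _ => (hsupp i).choose_spec.2
  have hGpos : ∀ s, 0 < G s := by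
    intro s
    obtain ⟨z0, h0, h1⟩ := hz0
    apply Finset.sum_pos'
    · intro z _
      by_cases h : P0 z = 0 ∨ P1 z = 0
      · rw [if_pos h]
      · rw [if_neg h]
        exact le_of_lt (mul_pos (lt_of_le_of_ne (hP0nn z) (Ne.symm (not_or.mp h).1))
          (Real.exp_pos _))
    · refine ⟨z0, mem_univ _, ?_⟩
      rw [if_neg (not_or.mpr ⟨h0, h1⟩)]
      exact mul_pos (lt_of_le_of_ne (hP0nn z0) (Ne.symm h0)) (Real.exp_pos _)
  -- derivative of G
  set D : ℝ → ℝ := fun s =>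
    ∑ z, if P0 z = 0 ∨ P1 z = 0 then 0 else P0 z * (Real.exp (s * L0 z) * L0 z) with hD_def
  have hG' : ∀ s, HasDerivAt G (D s) s := by
    intro s
    apply HasDerivAt.fun_sum
    intro z _
    by_cases h : P0 z = 0 ∨ P1 z = 0
    · simp only [if_pos h]
      exact hasDerivAt_const s 0
    · simp only [if_neg h]
      exact ((hasDerivAt_mul_const (L0 z)).exp).const_mul (P0 z)
  set f : ℝ → ℝ := fun s => Real.log (G s) with hf_def
  have hf' : ∀ s, HasDerivAt f (D s / G s) s := fun s => (hG' s).log (hGpos s).ne'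
  have hfc : Continuous f := by
    rw [continuous_iff_continuousAt]
    exact fun s => (hf' s).continuousAt
  -- minimizer on [0,1]
  obtain ⟨sst, hsst, hmin⟩ := isCompact_Icc.exists_isMinOn (α := ℝ)
    (Set.nonempty_Icc.mpr (by norm_num : (0:ℝ) ≤ 1)) hfc.continuousOn
  obtain ⟨hs0, hs1⟩ := hsst
  -- per-coordinate tilted distributions at sst
  set t : Fin n → Y → ℝ := fun i y =>
    if Q (w0 i) y = 0 ∨ Q (w1 i) y = 0 then 0
    else Q (w0 i) y ^ (1 - sst) * Q (w1 i) y ^ sst with ht_def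
  have htnn : ∀ i y, 0 ≤ t i y := by
    intro i y
    by_cases h : Q (w0 i) y = 0 ∨ Q (w1 i) y = 0
    · rw [ht_def]; simp only [if_pos h]; exact le_refl 0
    · rw [ht_def]; simp only [if_neg h]
      exact mul_nonneg (Real.rpow_nonneg (hQnn _ _) _) (Real.rpow_nonneg (hQnn _ _) _)
  set C : Fin n → ℝ := fun i => ∑ y, t i y with hC_def
  have hCpos : ∀ i, 0 < C i := by
    intro i
    obtain ⟨y, hy0, hy1⟩ := hsupp i
    apply Finset.sum_pos' (fun y' _ => htnn i y')
    refine ⟨y, mem_univ _, ?_⟩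
    rw [ht_def]; simp only [if_neg (not_or.mpr ⟨hy0, hy1⟩)]
    exact mul_pos (Real.rpow_pos_of_pos (lt_of_le_of_ne (hQnn _ _) (Ne.symm hy0)) _)
      (Real.rpow_pos_of_pos (lt_of_le_of_ne (hQnn _ _) (Ne.symm hy1)) _)
  set w : Fin n → Y → ℝ := fun i y => t i y / C i with hw_def
  have hwnn : ∀ i y, 0 ≤ w i y := fun i y => div_nonneg (htnn i y) (hCpos i).le
  have hw1 : ∀ i, ∑ y, w i y = 1 := by
    intro i
    rw [hw_def]
    simp only
    rw [← Finset.sum_div]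
    exact div_self (hCpos i).ne'
  -- per-coordinate log-likelihood ratios
  set ℓ : Fin n → Y → ℝ := fun i y =>
    if Q (w0 i) y = 0 ∨ Q (w1 i) y = 0 then 0
    else Real.log (Q (w1 i) y) - Real.log (Q (w0 i) y) with hl_def
  have hlbound : ∀ i y, |ℓ i y| ≤ c := by
    intro i y
    by_cases h : Q (w0 i) y = 0 ∨ Q (w1 i) y = 0
    · rw [hl_def]; simp only [if_pos h, abs_zero]; exact hc
    · rw [hl_def]; simp only [if_neg h]
      push_neg at h
      have h0 : pmin ≤ Q (w0 i) y := hple _ _ h.1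
      have h1 : pmin ≤ Q (w1 i) y := hple _ _ h.2
      have hu0 : Real.log (Q (w0 i) y) ≤ 0 := Real.log_nonpos (hQnn _ _) (hQle1 _ _)
      have hu1 : Real.log (Q (w1 i) y) ≤ 0 := Real.log_nonpos (hQnn _ _) (hQle1 _ _)
      have hd0 : Real.log pmin ≤ Real.log (Q (w0 i) y) := Real.log_le_log hpos h0
      have hd1 : Real.log pmin ≤ Real.log (Q (w1 i) y) := Real.log_le_log hpos h1
      have hcinv : c = - Real.log pmin := by rw [hc_def, one_div, Real.log_inv]
      rw [abs_le]
      constructor <;> linarith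
  set L : (Fin n → Y) → ℝ := fun z => ∑ i, ℓ i (z i) with hL_def
  set W : (Fin n → Y) → ℝ := fun z => ∏ i, w i (z i) with hW_def
  have hWnn : ∀ z, 0 ≤ W z := fun z => Finset.prod_nonneg fun i _ => hwnn i (z i)
  have hW1 : ∑ z, W z = 1 := by
    rw [hW_def]
    simp only
    rw [sum_prod_eval w, Finset.prod_congr rfl fun i _ => hw1 i, Finset.prod_const_one]
  -- factorization of the big Chernoff term
  have hfact : ∀ z, (if P0 z = 0 ∨ P1 z = 0 then 0 else P0 z ^ (1 - sst) * P1 z ^ sst)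
      = ∏ i, t i (z i) := by
    intro z
    by_cases h : ∃ i, Q (w0 i) (z i) = 0 ∨ Q (w1 i) (z i) = 0
    · obtain ⟨i, hi⟩ := h
      have hR : ∏ i, t i (z i) = 0 :=
        Finset.prod_eq_zero (mem_univ i) (by rw [ht_def]; simp only [if_pos hi])
      rw [hR, if_pos]
      rcases hi with hi | hi
      · exact Or.inl (Finset.prod_eq_zero (mem_univ i) hi)
      · exact Or.inr (Finset.prod_eq_zero (mem_univ i) hi)
    · push_neg at h
      have h0 : P0 z ≠ 0 := Finset.prod_ne_zero_iff.mpr fun i _ => (h i).1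
      have h1 : P1 z ≠ 0 := Finset.prod_ne_zero_iff.mpr fun i _ => (h i).2
      rw [if_neg (not_or.mpr ⟨h0, h1⟩)]
      have : ∀ i ∈ univ, t i (z i) = Q (w0 i) (z i) ^ (1 - sst) * Q (w1 i) (z i) ^ sst := by
        intro i _
        rw [ht_def]; simp only [if_neg (not_or.mpr (h i))]
      rw [Finset.prod_congr rfl this, Finset.prod_mul_distrib,
        Real.finset_prod_rpow univ _ (fun i _ => hQnn _ _) (1 - sst),
        Real.finset_prod_rpow univ _ (fun i _ => hQnn _ _) sst]
      rfl
  have hCW : ∀ z, (∏ i, C i) * W z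
      = (if P0 z = 0 ∨ P1 z = 0 then 0 else P0 z ^ (1 - sst) * P1 z ^ sst) := by
    intro z
    rw [hfact, hW_def]
    simp only
    rw [← Finset.prod_mul_distrib]
    exact Finset.prod_congr rfl fun i _ => mul_div_cancel₀ _ (hCpos i).ne'
  have hGprod : G sst = ∏ i, C i := by
    rw [← hGcher sst, cherSum]
    rw [Finset.sum_congr rfl fun z _ => hfact z, sum_prod_eval t]
  have hCprodpos : 0 < ∏ i, C i := Finset.prod_pos fun i _ => hCpos i
  -- marginals
  have hmarg : ∀ (i : Fin n) (A : Y → ℝ), ∑ z, W z * A (z i) = ∑ y, w i y * A y := by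
    intro i A
    have h := expect_two w hw1 A (fun _ => 1) i i
    simp only [if_pos rfl, mul_one] at h
    rw [hW_def]
    simpa using h
  set mi : Fin n → ℝ := fun i => ∑ y, w i y * ℓ i y with hmi_def
  set m : ℝ := ∑ z, W z * L z with hm_def
  have hmsum : m = ∑ i, mi i := by
    rw [hm_def]
    have : ∀ z, W z * L z = ∑ i, W z * ℓ i (z i) := by
      intro z; rw [hL_def]; exact Finset.mul_sum _ _ _
    rw [Finset.sum_congr rfl fun z _ => this z, Finset.sum_comm]
    exact Finset.sum_congr rfl fun i _ => hmarg i (ℓ i)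
  -- L agrees with L0 on the common support
  have hLL0 : ∀ z, ¬(P0 z = 0 ∨ P1 z = 0) → L z = L0 z := by
    intro z h
    push_neg at h
    have h0 : ∀ i, Q (w0 i) (z i) ≠ 0 := by
      intro i
      exact Finset.prod_ne_zero_iff.mp h.1 i (mem_univ i)
    have h1 : ∀ i, Q (w1 i) (z i) ≠ 0 := by
      intro i
      exact Finset.prod_ne_zero_iff.mp h.2 i (mem_univ i)
    rw [hL_def, hL0_def]
    simp only
    rw [hP0_def, hP1_def, prodDist, prodDist,
      Real.log_prod (fun i _ => h0 i), Real.log_prod (fun i _ => h1 i),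
      ← Finset.sum_sub_distrib]
    apply Finset.sum_congr rfl
    intro i _
    rw [hl_def]
    simp only [if_neg (not_or.mpr ⟨h0 i, h1 i⟩)]
  -- m is the derivative of f at sst
  have hDm : D sst = G sst * m := by
    rw [hm_def, hGprod, Finset.mul_sum, hD_def]
    simp only
    apply Finset.sum_congr rfl
    intro z _
    by_cases h : P0 z = 0 ∨ P1 z = 0
    · rw [if_pos h]
      have hW0 : W z = 0 := by
        have : ∃ i, Q (w0 i) (z i) = 0 ∨ Q (w1 i) (z i) = 0 := by
          by_contra hcon
          push_neg at hcon
          rcases h with h | h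
          · exact (Finset.prod_ne_zero_iff.mpr fun i _ => (hcon i).1) h
          · exact (Finset.prod_ne_zero_iff.mpr fun i _ => (hcon i).2) h
        obtain ⟨i, hi⟩ := this
        refine Finset.prod_eq_zero (mem_univ i) ?_
        rw [hw_def]
        simp only
        rw [ht_def]
        simp only [if_pos hi, zero_div]
      rw [hW0]
      ring
    · rw [if_neg h]
      have := hCW z
      rw [if_neg h] at this
      rw [show (∏ i, C i) * (W z * L z) = ((∏ i, C i) * W z) * L z by ring, this,
        hterm sst z h, hLL0 z h]
      ring
  have hm' : HasDerivAt f m sst := by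
    have h := hf' sst
    rw [hDm] at h
    rwa [mul_comm, mul_div_assoc, div_self (hGpos sst).ne', mul_one] at h
  -- sign condition at the minimizer
  have hsign : (2 * sst - 1) * m + |m| ≤ 0 := by
    rcases eq_or_lt_of_le hs0 with h0 | h0
    · -- sst = 0 : m ≥ 0
      have hm_nonneg : 0 ≤ m := by
        by_contra hneg
        push_neg at hneg
        have hslope := hasDerivAt_iff_tendsto_slope.mp hm'
        have h1 : Filter.Tendsto (slope f sst) (nhdsWithin sst (Set.Ioi sst)) (nhds m) :=
          hslope.mono_left (nhdsWithin_mono _ (fun x hx => ne_of_gt hx))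
        have h2 : ∀ᶠ x in nhdsWithin sst (Set.Ioi sst), slope f sst x < 0 :=
          h1.eventually_lt_const hneg
        have h3 : ∀ᶠ x in nhdsWithin sst (Set.Ioi sst), x < 1 := by
          apply eventually_nhdsWithin_of_eventually_nhds
          apply Filter.Tendsto.eventually_lt_const _ Filter.tendsto_id
          rw [← h0]; norm_num
        have h4 : ∀ᶠ x in nhdsWithin sst (Set.Ioi sst), x ∈ Set.Ioi sst :=
          eventually_mem_nhdsWithin
        obtain ⟨x, hx2, hx3, hx4⟩ := (h2.and (h3.and h4)).exists
        have hxpos : 0 < x - sst := sub_pos.mpr hx4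
        have hfx : f x - f sst < 0 := by
          have hh := mul_neg_of_neg_of_pos hx2 hxpos
          rw [slope_def_field, div_mul_cancel₀ _ hxpos.ne'] at hh
          exact hh
        have : f sst ≤ f x := hmin ⟨le_of_lt (h0 ▸ hx4), le_of_lt hx3⟩
        linarith
      rw [← h0, abs_of_nonneg hm_nonneg]
      ring_nf
      linarith
    rcases eq_or_lt_of_le hs1 with h1 | h1
    · -- sst = 1 : m ≤ 0
      have hm_nonpos : m ≤ 0 := by
        by_contra hneg
        push_neg at hneg
        have hslope := hasDerivAt_iff_tendsto_slope.mp hm'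
        have hh1 : Filter.Tendsto (slope f sst) (nhdsWithin sst (Set.Iio sst)) (nhds m) :=
          hslope.mono_left (nhdsWithin_mono _ (fun x hx => ne_of_lt hx))
        have hh2 : ∀ᶠ x in nhdsWithin sst (Set.Iio sst), 0 < slope f sst x :=
          hh1.eventually_const_lt hneg
        have hh3 : ∀ᶠ x in nhdsWithin sst (Set.Iio sst), 0 < x := by
          apply eventually_nhdsWithin_of_eventually_nhds
          exact Filter.Tendsto.eventually_const_lt (by rw [h1]; norm_num) Filter.tendsto_id
        have hh4 : ∀ᶠ x in nhdsWithin sst (Set.Iio sst), x ∈ Set.Iio sst :=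
          eventually_mem_nhdsWithin
        obtain ⟨x, hx2, hx3, hx4⟩ := (hh2.and (hh3.and hh4)).exists
        have hxneg : x - sst < 0 := sub_neg.mpr hx4
        have hfx : f x - f sst < 0 := by
          have hh := mul_neg_of_pos_of_neg hx2 hxneg
          rw [slope_def_field, div_mul_cancel₀ _ hxneg.ne] at hh
          exact hh
        have : f sst ≤ f x := hmin ⟨le_of_lt hx3, le_of_lt (h1 ▸ hx4)⟩
        linarith
      rw [h1, abs_of_nonpos hm_nonpos]
      ring_nf
      linarith
    · -- interior : m = 0
      have hloc : IsLocalMin f sst := hmin.isLocalMin (Icc_mem_nhds h0 h1)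
      have : m = 0 := hloc.hasDerivAt_eq_zero hm'
      rw [this]
      simp
  -- variance computation
  have hzero : ∀ i, ∑ y, w i y * (ℓ i y - mi i) = 0 := by
    intro i
    have : ∀ y, w i y * (ℓ i y - mi i) = w i y * ℓ i y - w i y * mi i := fun y => by ring
    rw [Finset.sum_congr rfl fun y _ => this y, Finset.sum_sub_distrib, ← Finset.sum_mul,
      hw1 i, one_mul]
    exact sub_self (mi i)
  have hvar : ∑ z, W z * (L z - m) ^ 2 = ∑ i, ∑ y, w i y * (ℓ i y - mi i) ^ 2 := by
    have hLm : ∀ z, L z - m = ∑ i, (ℓ i (z i) - mi i) := by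
      intro z
      rw [hmsum, hL_def]
      simp only
      rw [Finset.sum_sub_distrib]
    have hsq : ∀ z, W z * (L z - m) ^ 2
        = ∑ i, ∑ j, W z * ((ℓ i (z i) - mi i) * (ℓ j (z j) - mi j)) := by
      intro z
      rw [hLm, sq, Finset.sum_mul_sum, Finset.mul_sum]
      exact Finset.sum_congr rfl fun i _ => Finset.mul_sum _ _ _
    rw [Finset.sum_congr rfl fun z _ => hsq z, Finset.sum_comm]
    apply Finset.sum_congr rfl
    intro i _
    rw [Finset.sum_comm]
    have hexp : ∀ j, ∑ z, W z * ((ℓ i (z i) - mi i) * (ℓ j (z j) - mi j))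
        = if i = j then ∑ y, w i y * (ℓ i y - mi i) ^ 2 else 0 := by
      intro j
      have h := expect_two w hw1 (fun y => ℓ i y - mi i) (fun y => ℓ j y - mi j) i j
      rw [hW_def]
      by_cases hij : i = j
      · subst hij
        rw [if_pos rfl] at h ⊢
        rw [h]
        exact Finset.sum_congr rfl fun y _ => by rw [sq]
      · rw [if_neg hij] at h ⊢
        rw [h, hzero i, zero_mul]
    rw [Finset.sum_congr rfl fun j _ => hexp j, Finset.sum_ite_eq univ i
      (fun _ => ∑ y, w i y * (ℓ i y - mi i) ^ 2)]
    simp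
  have hvar_le : ∑ z, W z * (L z - m) ^ 2 ≤ n * c ^ 2 := by
    rw [hvar]
    have hinner : ∀ i, ∑ y, w i y * (ℓ i y - mi i) ^ 2 ≤ c ^ 2 := by
      intro i
      have hexpand : ∑ y, w i y * (ℓ i y - mi i) ^ 2
          = (∑ y, w i y * ℓ i y ^ 2) - mi i ^ 2 := by
        have h1 : ∀ y, w i y * (ℓ i y - mi i) ^ 2
            = w i y * ℓ i y ^ 2 - 2 * mi i * (w i y * ℓ i y) + mi i ^ 2 * w i y := fun y => by
          ring
        rw [Finset.sum_congr rfl fun y _ => h1 y, Finset.sum_add_distrib,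
          Finset.sum_sub_distrib, ← Finset.mul_sum, ← Finset.mul_sum, hw1 i]
        have hmieq : (∑ y, w i y * ℓ i y) = mi i := rfl
        rw [hmieq]
        ring
      have h2 : ∑ y, w i y * ℓ i y ^ 2 ≤ c ^ 2 := by
        calc ∑ y, w i y * ℓ i y ^ 2 ≤ ∑ y, w i y * c ^ 2 := by
              apply Finset.sum_le_sum
              intro y _
              apply mul_le_mul_of_nonneg_left _ (hwnn i y)
              rw [← sq_abs]
              exact pow_le_pow_left₀ (abs_nonneg _) (hlbound i y) 2
          _ = c ^ 2 := by rw [← Finset.sum_mul, hw1 i, one_mul]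
      have h3 : 0 ≤ mi i ^ 2 := sq_nonneg _
      linarith
    calc ∑ i, ∑ y, w i y * (ℓ i y - mi i) ^ 2 ≤ ∑ _i : Fin n, c ^ 2 :=
          Finset.sum_le_sum fun i _ => hinner i
      _ = n * c ^ 2 := by rw [Finset.sum_const, card_univ, Fintype.card_fin, nsmul_eq_mul]
  -- bound on E|L|
  set v : ℝ := ∑ z, W z * (L z - m) ^ 2 with hv_def
  have hvnn : 0 ≤ v := Finset.sum_nonneg fun z _ => mul_nonneg (hWnn z) (sq_nonneg _)
  have habs : ∑ z, W z * |L z| ≤ |m| + Real.sqrt v := by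
    have h1 : ∑ z, W z * |L z| ≤ ∑ z, (W z * |m| + W z * |L z - m|) := by
      apply Finset.sum_le_sum
      intro z _
      have : |L z| ≤ |m| + |L z - m| := by
        calc |L z| = |m + (L z - m)| := by ring_nf
          _ ≤ |m| + |L z - m| := abs_add_le _ _
      calc W z * |L z| ≤ W z * (|m| + |L z - m|) :=
            mul_le_mul_of_nonneg_left this (hWnn z)
        _ = W z * |m| + W z * |L z - m| := by ring
    have h2 : ∑ z, W z * |L z - m| ≤ Real.sqrt v := by
      have := expect_abs_le_sqrt W (fun z => L z - m) hWnn hW1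
      simpa [hv_def] using this
    rw [Finset.sum_add_distrib, ← Finset.sum_mul, hW1, one_mul] at h1
    linarith
  have hsqrtv : Real.sqrt v ≤ Real.sqrt n * c := by
    calc Real.sqrt v ≤ Real.sqrt (n * c ^ 2) := Real.sqrt_le_sqrt hvar_le
      _ = Real.sqrt n * c := by
          rw [Real.sqrt_mul (Nat.cast_nonneg n), Real.sqrt_sq hc]
  -- the max identity and the expectation of g
  set g : (Fin n → Y) → ℝ := fun z => max (sst * L z) (-(1 - sst) * L z) with hg_def
  have hgid : ∀ z, g z = ((2 * sst - 1) * L z + |L z|) / 2 := by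
    intro z
    rw [hg_def]
    simp only
    rcases le_or_gt 0 (L z) with h | h
    · rw [abs_of_nonneg h, max_eq_left]
      · ring
      · nlinarith
    · rw [abs_of_neg h, max_eq_right]
      · ring
      · nlinarith
  have hEg : ∑ z, W z * g z ≤ Real.sqrt v / 2 := by
    have h1 : ∑ z, W z * g z
        = (2 * sst - 1) / 2 * m + (1 / 2) * ∑ z, W z * |L z| := by
      calc ∑ z, W z * g z
          = ∑ z, ((2 * sst - 1) / 2 * (W z * L z) + (1 / 2) * (W z * |L z|)) :=
            Finset.sum_congr rfl fun z _ => by rw [hgid z]; ring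
        _ = (2 * sst - 1) / 2 * m + (1 / 2) * ∑ z, W z * |L z| := by
            rw [Finset.sum_add_distrib, ← Finset.mul_sum, ← Finset.mul_sum, ← hm_def]
    rw [h1]
    linarith
  -- lower bound each min by the tilted representation
  have hminlow : ∀ z, (∏ i, C i) * (W z * Real.exp (-(g z))) ≤ min (P0 z) (P1 z) := by
    intro z
    by_cases h : P0 z = 0 ∨ P1 z = 0
    · have hW0 : W z = 0 := by
        have hex : ∃ i, Q (w0 i) (z i) = 0 ∨ Q (w1 i) (z i) = 0 := by
          by_contra hcon
          push_neg at hcon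
          rcases h with h | h
          · exact (Finset.prod_ne_zero_iff.mpr fun i _ => (hcon i).1) h
          · exact (Finset.prod_ne_zero_iff.mpr fun i _ => (hcon i).2) h
        obtain ⟨i, hi⟩ := hex
        refine Finset.prod_eq_zero (mem_univ i) ?_
        rw [hw_def]
        simp only
        rw [ht_def]
        simp only [if_pos hi, zero_div]
      rw [hW0]
      simp only [zero_mul, mul_zero]
      exact le_min (hP0nn z) (hP1nn z)
    · push_neg at h
      have h0 : 0 < P0 z := lt_of_le_of_ne (hP0nn z) (Ne.symm h.1)
      have h1 : 0 < P1 z := lt_of_le_of_ne (hP1nn z) (Ne.symm h.2)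
      have hCWz := hCW z
      rw [if_neg (not_or.mpr h)] at hCWz
      have hLz : L z = Real.log (P1 z) - Real.log (P0 z) := hLL0 z (not_or.mpr h)
      have hgz : g z = max (sst * (Real.log (P1 z) - Real.log (P0 z)))
          (-(1 - sst) * (Real.log (P1 z) - Real.log (P0 z))) := by
        rw [hg_def]
        simp only
        rw [hLz]
      have hmin_exp : min (P0 z) (P1 z)
          = Real.exp (min (Real.log (P0 z)) (Real.log (P1 z))) := by
        have h := Real.exp_monotone.map_min (a := Real.log (P0 z)) (b := Real.log (P1 z))
        rw [Real.exp_log h0, Real.exp_log h1] at h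
        exact h.symm
      have key : min (P0 z) (P1 z) = P0 z ^ (1 - sst) * P1 z ^ sst * Real.exp (-(g z)) := by
        rw [hmin_exp, Real.rpow_def_of_pos h0, Real.rpow_def_of_pos h1, ← Real.exp_add,
          ← Real.exp_add]
        congr 1
        rw [hgz]
        exact min_exp_identity _ _ _ hs0 hs1
      rw [key, ← hCWz]
      exact le_of_eq (by ring)
  -- partition bound
  have hcoverU : D0 ∪ D1 = univ := Finset.eq_univ_iff_forall.mpr fun z =>
    Finset.mem_union.mpr (hcover z)
  have hminsum : ∑ z, min (P0 z) (P1 z) ≤ ∑ z ∈ D1, P0 z + ∑ z ∈ D0, P1 z := by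
    calc ∑ z, min (P0 z) (P1 z) = ∑ z ∈ D0 ∪ D1, min (P0 z) (P1 z) := by rw [hcoverU]
      _ = ∑ z ∈ D0, min (P0 z) (P1 z) + ∑ z ∈ D1, min (P0 z) (P1 z) :=
          Finset.sum_union hdisj
      _ ≤ ∑ z ∈ D0, P1 z + ∑ z ∈ D1, P0 z :=
          add_le_add (Finset.sum_le_sum fun z _ => min_le_right _ _)
            (Finset.sum_le_sum fun z _ => min_le_left _ _)
      _ = ∑ z ∈ D1, P0 z + ∑ z ∈ D0, P1 z := add_comm _ _
  -- Jensen step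
  have hjensen : (∏ i, C i) * Real.exp (-(∑ z, W z * g z)) ≤ ∑ z, min (P0 z) (P1 z) := by
    have hj := jensen_exp W (fun z => -(g z)) hWnn hW1
    have he : ∑ z, W z * -(g z) = -(∑ z, W z * g z) := by
      rw [← Finset.sum_neg_distrib]
      exact Finset.sum_congr rfl fun z _ => (mul_neg _ _)
    calc (∏ i, C i) * Real.exp (-(∑ z, W z * g z))
        = (∏ i, C i) * Real.exp (∑ z, W z * -(g z)) := by rw [he]
      _ ≤ (∏ i, C i) * ∑ z, W z * Real.exp (-(g z)) :=
          mul_le_mul_of_nonneg_left hj hCprodpos.le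
      _ = ∑ z, (∏ i, C i) * (W z * Real.exp (-(g z))) := Finset.mul_sum _ _ _
      _ ≤ ∑ z, min (P0 z) (P1 z) := Finset.sum_le_sum fun z _ => hminlow z
  have hA : (∏ i, C i) * Real.exp (-(Real.sqrt v / 2))
      ≤ ∑ z ∈ D1, P0 z + ∑ z ∈ D0, P1 z := by
    refine le_trans ?_ (le_trans hjensen hminsum)
    exact mul_le_mul_of_nonneg_left (Real.exp_le_exp.mpr (neg_le_neg hEg)) hCprodpos.le
  have hApos : 0 < (∏ i, C i) * Real.exp (-(Real.sqrt v / 2)) :=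
    mul_pos hCprodpos (Real.exp_pos _)
  have hlogle : - Real.log (∑ z ∈ D1, P0 z + ∑ z ∈ D0, P1 z)
      ≤ - Real.log ((∏ i, C i) * Real.exp (-(Real.sqrt v / 2))) :=
    neg_le_neg (Real.log_le_log hApos hA)
  have hlogA : Real.log ((∏ i, C i) * Real.exp (-(Real.sqrt v / 2)))
      = Real.log (∏ i, C i) + -(Real.sqrt v / 2) := by
    rw [Real.log_mul hCprodpos.ne' (Real.exp_pos _).ne', Real.log_exp]
  have hdCsup : - Real.log (∏ i, C i)
      ≤ sSup ((fun s : ℝ => dC P0 P1 s) '' Set.Icc 0 1) := by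
    have hfun : (fun s : ℝ => dC P0 P1 s) = fun s => - f s :=
      funext fun s => by rw [dC, hGcher s]
    have hbdd : BddAbove ((fun s : ℝ => dC P0 P1 s) '' Set.Icc 0 1) := by
      rw [hfun]
      exact (isCompact_Icc.image hfc.neg).bddAbove
    have heq : - Real.log (∏ i, C i) = dC P0 P1 sst := by
      rw [dC, hGcher, hGprod]
    rw [heq]
    exact le_csSup hbdd ⟨sst, ⟨hs0, hs1⟩, rfl⟩
  have hsq2 : Real.sqrt (n : ℝ) * c ≤ Real.sqrt (2 * n) * c :=
    mul_le_mul_of_nonneg_right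
      (Real.sqrt_le_sqrt (by push_cast; linarith [Nat.cast_nonneg (α := ℝ) n])) hc
  have hlog4 : (0 : ℝ) ≤ Real.log 4 := Real.log_nonneg (by norm_num)
  have hsqv2 : Real.sqrt v / 2 ≤ Real.sqrt (2 * n) * c + Real.log 4 := by
    have h0 : 0 ≤ Real.sqrt (n : ℝ) * c := mul_nonneg (Real.sqrt_nonneg _) hc
    linarith [hsqrtv]
  linarith [hlogle, hlogA, hdCsup, hsqv2]


end
end

section
/- Let Q be a binary-input DMC with finite output alphabet whose conditional output distributions Q_0, Q_1 have a common support point, let p_min be its smallest nonzero transition probability, let w⃗_0, w⃗_1 ∈ {0,1}^n, and let D_0, D_1 be a partition of the n-fold output alphabet with p_{e,0} = Q^n(D_1 | w⃗_0) and p_{e,1} = Q^n(D_0 | w⃗_1). Let n_{01} be the number of positions i with w⃗_0^{(i)} = 0 and w⃗_1^{(i)} = 1, and n_{10} the number of positions i with w⃗_0^{(i)} = 1 and w⃗_1^{(i)} = 0. Then for any s ∈ (0,1), at least one of the following holds: (a) −log p_{e,0} ≤ n_{01}·D(Q_s‖Q_0) + n_{10}·D(Q_{1−s}‖Q_1) +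 √(2n)·log(1/p_min) + log 4; (b) −log p_{e,1} ≤ n_{01}·D(Q_s‖Q_1) + n_{10}·D(Q_{1−s}‖Q_0) + √(2n)·log(1/p_min) + log 4. -/
open scoped BigOperators
open Finset

noncomputable section

section Aux
variable {Z : Type*} [Fintype Z]

lemma aux_sum_prod {n : ℕ} (f : Fin n → Z → ℝ) :
    ∑ z : Fin n → Z, ∏ i, f i (z i) = ∏ i, ∑ x, f i x := by
  rw [Finset.prod_univ_sum, ← Fintype.piFinset_univ]

lemma aux_marg1 {n : ℕ} (r : Fin n → Z → ℝ) (hr1 : ∀ i, ∑ x, r i x = 1)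
    (h : Z → ℝ) (i : Fin n) :
    ∑ z : Fin n → Z, (∏ j, r j (z j)) * h (z i) = ∑ x, r i x * h x := by
  have key : ∀ z : Fin n → Z, (∏ j, r j (z j)) * h (z i)
      = ∏ j, (r j (z j) * (if j = i then h (z j) else 1)) := by
    intro z
    rw [Finset.prod_mul_distrib]
    congr 1
    rw [Finset.prod_ite_eq' Finset.univ i (fun j => h (z j))]
    simp
  simp_rw [key]
  rw [aux_sum_prod (fun j x => r j x * if j = i then h x else 1)]
  have h2 : ∀ j : Fin n, (∑ x, r j x * (if j = i then h x else 1))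
      = if j = i then (∑ x, r i x * h x) else 1 := by
    intro j
    by_cases hj : j = i
    · subst hj; simp
    · simp [hj, hr1 j]
  rw [Finset.prod_congr rfl (fun j _ => h2 j)]
  rw [Finset.prod_ite_eq' Finset.univ i (fun _ => ∑ x, r i x * h x)]
  simp

lemma aux_marg2 {n : ℕ} (r : Fin n → Z → ℝ) (hr1 : ∀ i, ∑ x, r i x = 1)
    (g h : Z → ℝ) (i j : Fin n) (hij : i ≠ j) :
    ∑ z : Fin n → Z, (∏ k, r k (z k)) * (g (z i) * h (z j))
      = (∑ x, r i x * g x) * (∑ x, r j x * h x) := by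
  have key : ∀ z : Fin n → Z, (∏ k, r k (z k)) * (g (z i) * h (z j))
      = ∏ k, (r k (z k) * ((if k = i then g (z k) else 1) * (if k = j then h (z k) else 1))) := by
    intro z
    rw [Finset.prod_mul_distrib, Finset.prod_mul_distrib,
      Finset.prod_ite_eq' Finset.univ i (fun k => g (z k)),
      Finset.prod_ite_eq' Finset.univ j (fun k => h (z k))]
    simp
  simp_rw [key]
  rw [aux_sum_prod (fun k x => r k x * ((if k = i then g x else 1) * (if k = j then h x else 1)))]
  have hfac : ∀ k : Fin n, (∑ x, r k x * ((if k = i then g x else 1) * (if k = j then h x else 1)))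
      = if k = i then (∑ x, r i x * g x) else if k = j then (∑ x, r j x * h x) else 1 := by
    intro k
    by_cases hk : k = i
    · subst hk
      have : k ≠ j := hij
      simp [this, hr1]
    · by_cases hk2 : k = j
      · subst hk2; simp [hk, hr1]
      · simp [hk, hk2, hr1 k]
  rw [Finset.prod_congr rfl (fun k _ => hfac k)]
  rw [← Finset.mul_prod_erase Finset.univ _ (Finset.mem_univ i), if_pos rfl]
  congr 1
  have h1 : ∀ k ∈ Finset.univ.erase i,
      (if k = i then (∑ x, r i x * g x) else if k = j then (∑ x, r j x * h x) else 1)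
      = if k = j then (∑ x, r j x * h x) else 1 := by
    intro k hk
    rw [if_neg (Finset.ne_of_mem_erase hk)]
  rw [Finset.prod_congr rfl h1,
    Finset.prod_ite_eq' (Finset.univ.erase i) j (fun _ => ∑ x, r j x * h x)]
  simp [Ne.symm hij]

lemma aux_var_sum {n : ℕ} (r g : Fin n → Z → ℝ)
    (hr1 : ∀ i, ∑ x, r i x = 1) (hg0 : ∀ i, ∑ x, r i x * g i x = 0) :
    ∑ z : Fin n → Z, (∏ i, r i (z i)) * (∑ i, g i (z i)) ^ 2
      = ∑ i, ∑ x, r i x * g i x ^ 2 := by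
  have expand : ∀ z : Fin n → Z, (∏ i, r i (z i)) * (∑ i, g i (z i)) ^ 2
      = ∑ i, ∑ j, (∏ k, r k (z k)) * (g i (z i) * g j (z j)) := by
    intro z
    rw [sq, Finset.sum_mul_sum, Finset.mul_sum]
    refine Finset.sum_congr rfl fun i _ => ?_
    rw [Finset.mul_sum]
  simp_rw [expand]
  rw [Finset.sum_comm]
  refine Finset.sum_congr rfl fun i _ => ?_
  rw [Finset.sum_comm]
  rw [Finset.sum_eq_single i]
  · have := aux_marg1 r hr1 (fun x => g i x * g i x) i
    rw [this]
    refine Finset.sum_congr rfl fun x _ => ?_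
    ring
  · intro j _ hji
    rw [aux_marg2 r hr1 (g i) (g j) i j (Ne.symm hji), hg0 i, zero_mul]
  · intro hi; exact absurd (Finset.mem_univ i) hi

lemma aux_cheb {n : ℕ} (r ℓ : Fin n → Z → ℝ) (κ lam : ℝ)
    (hr0 : ∀ i x, 0 ≤ r i x) (hr1 : ∀ i, ∑ x, r i x = 1)
    (hv : ∀ i, ∑ x, r i x * (ℓ i x - ∑ y, r i y * ℓ i y) ^ 2 ≤ κ)
    (hlam : 0 < lam) :
    ∑ z ∈ Finset.univ.filter (fun z : Fin n → Z =>
        (∑ i, ∑ y, r i y * ℓ i y) + lam ≤ ∑ i, ℓ i (z i)),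
      ∏ i, r i (z i) ≤ n * κ / lam ^ 2 := by
  have hRnn : ∀ z : Fin n → Z, 0 ≤ ∏ i, r i (z i) :=
    fun z => Finset.prod_nonneg fun i _ => hr0 i (z i)
  have hg0 : ∀ i, ∑ x, r i x * (ℓ i x - ∑ y, r i y * ℓ i y) = 0 := by
    intro i
    simp_rw [mul_sub]
    rw [Finset.sum_sub_distrib, ← Finset.sum_mul, hr1, one_mul, sub_self]
  have step1 : ∀ z ∈ Finset.univ.filter (fun z : Fin n → Z =>
      (∑ i, ∑ y, r i y * ℓ i y) + lam ≤ ∑ i, ℓ i (z i)),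
      ∏ i, r i (z i) ≤ (∏ i, r i (z i)) *
        ((∑ i, (ℓ i (z i) - ∑ y, r i y * ℓ i y)) ^ 2 / lam ^ 2) := by
    intro z hz
    rw [Finset.mem_filter] at hz
    have h1 : lam ≤ ∑ i, (ℓ i (z i) - ∑ y, r i y * ℓ i y) := by
      rw [Finset.sum_sub_distrib]
      linarith [hz.2]
    have h3 : 1 ≤ (∑ i, (ℓ i (z i) - ∑ y, r i y * ℓ i y)) ^ 2 / lam ^ 2 := by
      rw [le_div_iff₀ (by positivity)]
      nlinarith
    calc ∏ i, r i (z i) = (∏ i, r i (z i)) * 1 := (mul_one _).symm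
      _ ≤ _ := mul_le_mul_of_nonneg_left h3 (hRnn z)
  calc ∑ z ∈ Finset.univ.filter (fun z : Fin n → Z =>
        (∑ i, ∑ y, r i y * ℓ i y) + lam ≤ ∑ i, ℓ i (z i)), ∏ i, r i (z i)
      ≤ ∑ z ∈ Finset.univ.filter (fun z : Fin n → Z =>
          (∑ i, ∑ y, r i y * ℓ i y) + lam ≤ ∑ i, ℓ i (z i)),
        (∏ i, r i (z i)) * ((∑ i, (ℓ i (z i) - ∑ y, r i y * ℓ i y)) ^ 2 / lam ^ 2) :=
        Finset.sum_le_sum step1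
    _ ≤ ∑ z : Fin n → Z,
        (∏ i, r i (z i)) * ((∑ i, (ℓ i (z i) - ∑ y, r i y * ℓ i y)) ^ 2 / lam ^ 2) := by
        apply Finset.sum_le_sum_of_subset_of_nonneg (Finset.filter_subset _ _)
        intro z _ _
        exact mul_nonneg (hRnn z) (by positivity)
    _ = (∑ z : Fin n → Z,
        (∏ i, r i (z i)) * (∑ i, (ℓ i (z i) - ∑ y, r i y * ℓ i y)) ^ 2) / lam ^ 2 := by
        rw [Finset.sum_div]
        refine Finset.sum_congr rfl fun z _ => ?_
        rw [mul_div_assoc]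
    _ = (∑ i, ∑ x, r i x * (ℓ i x - ∑ y, r i y * ℓ i y) ^ 2) / lam ^ 2 := by
        rw [aux_var_sum r (fun i x => ℓ i x - ∑ y, r i y * ℓ i y) hr1 hg0]
    _ ≤ (n * κ) / lam ^ 2 := by
        gcongr
        calc ∑ i, ∑ x, r i x * (ℓ i x - ∑ y, r i y * ℓ i y) ^ 2
            ≤ ∑ _i : Fin n, κ := Finset.sum_le_sum fun i _ => hv i
          _ = n * κ := by rw [Finset.sum_const, Finset.card_univ, Fintype.card_fin, nsmul_eq_mul]

end Aux

section Aux2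
variable {Z : Type*} [Fintype Z]

lemma aux_le_one (p : Z → ℝ) (hp : IsPMF p) (x : Z) : p x ≤ 1 := by
  rw [← hp.2]
  exact Finset.single_le_sum (fun y _ => hp.1 y) (Finset.mem_univ x)

lemma aux_eq_one_unique (p : Z → ℝ) (hp : IsPMF p) (a : Z) (ha : p a = 1)
    (b : Z) (hb : b ≠ a) : p b = 0 := by
  classical
  have h2 : p a + p b ≤ ∑ x, p x := by
    rw [← Finset.sum_pair (Ne.symm hb)]
    exact Finset.sum_le_sum_of_subset_of_nonneg (Finset.subset_univ _) fun y _ _ => hp.1 y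
  have h3 := hp.1 b
  rw [hp.2, ha] at h2
  linarith

lemma aux_cherSum_pos (p q : Z → ℝ) (hp0 : ∀ x, 0 ≤ p x) (hq0 : ∀ x, 0 ≤ q x)
    (hcs : CommonSupport p q) (t : ℝ) : 0 < cherSum p q t := by
  obtain ⟨x0, hx0p, hx0q⟩ := hcs
  unfold cherSum
  apply Finset.sum_pos'
  · intro x _
    split
    · exact le_rfl
    · exact mul_nonneg (Real.rpow_nonneg (hp0 x) _) (Real.rpow_nonneg (hq0 x) _)
  · refine ⟨x0, Finset.mem_univ x0, ?_⟩
    rw [if_neg (by simp [hx0p, hx0q])]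
    have hp : 0 < p x0 := (hp0 x0).lt_of_ne (Ne.symm hx0p)
    have hq : 0 < q x0 := (hq0 x0).lt_of_ne (Ne.symm hx0q)
    exact mul_pos (Real.rpow_pos_of_pos hp _) (Real.rpow_pos_of_pos hq _)

lemma aux_cherSum_nonneg (p q : Z → ℝ) (hp0 : ∀ x, 0 ≤ p x) (hq0 : ∀ x, 0 ≤ q x)
    (t : ℝ) : 0 ≤ cherSum p q t := by
  unfold cherSum
  apply Finset.sum_nonneg
  intro x _
  split
  · exact le_rfl
  · exact mul_nonneg (Real.rpow_nonneg (hp0 x) _) (Real.rpow_nonneg (hq0 x) _)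

lemma aux_tilted_nonneg (p q : Z → ℝ) (hp0 : ∀ x, 0 ≤ p x) (hq0 : ∀ x, 0 ≤ q x)
    (t : ℝ) (x : Z) : 0 ≤ tilted p q t x := by
  unfold tilted
  apply div_nonneg _ (aux_cherSum_nonneg p q hp0 hq0 t)
  split
  · exact le_rfl
  · exact mul_nonneg (Real.rpow_nonneg (hp0 x) _) (Real.rpow_nonneg (hq0 x) _)

lemma aux_tilted_sum (p q : Z → ℝ) (t : ℝ) (hC : 0 < cherSum p q t) :
    ∑ x, tilted p q t x = 1 := by
  unfold tilted
  rw [← Finset.sum_div]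
  exact div_self (ne_of_gt hC)

lemma aux_tilted_supp (p q : Z → ℝ) (t : ℝ) (x : Z) (h : tilted p q t x ≠ 0) :
    p x ≠ 0 ∧ q x ≠ 0 := by
  by_contra hc
  apply h
  unfold tilted
  rw [if_pos (by tauto), zero_div]

lemma aux_tilted_swap (p q : Z → ℝ) (t : ℝ) :
    tilted p q t = tilted q p (1 - t) := by
  have h1 : (1 : ℝ) - (1 - t) = t := by ring
  have hcs : cherSum p q t = cherSum q p (1 - t) := by
    unfold cherSum
    refine Finset.sum_congr rfl fun x _ => ?_
    rw [h1]
    by_cases hp : p x = 0 <;> by_cases hq : q x = 0 <;> simp [hp, hq, mul_comm]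
  funext x
  unfold tilted
  rw [hcs, h1]
  by_cases hp : p x = 0 <;> by_cases hq : q x = 0 <;> simp [hp, hq, mul_comm]

lemma aux_tilt_ratio (p q : Z → ℝ) (hp0 : ∀ x, 0 ≤ p x) (hq0 : ∀ x, 0 ≤ q x)
    (t : ℝ) (hC : 0 < cherSum p q t) (x : Z) (hpx : p x ≠ 0) (hqx : q x ≠ 0) :
    Real.log (tilted p q t x / p x)
      = t * (Real.log (q x) - Real.log (p x)) + (- Real.log (cherSum p q t)) := by
  have hp : 0 < p x := (hp0 x).lt_of_ne (Ne.symm hpx)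
  have hq : 0 < q x := (hq0 x).lt_of_ne (Ne.symm hqx)
  have hA : (0:ℝ) < p x ^ (1 - t) * q x ^ t :=
    mul_pos (Real.rpow_pos_of_pos hp _) (Real.rpow_pos_of_pos hq _)
  have ht : tilted p q t x = p x ^ (1 - t) * q x ^ t / cherSum p q t := by
    unfold tilted
    rw [if_neg (by simp [hpx, hqx])]
  rw [ht, div_div]
  rw [Real.log_div (ne_of_gt hA) (by positivity)]
  rw [Real.log_mul (ne_of_gt hC) hpx, Real.log_mul (by positivity) (by positivity),
    Real.log_rpow hp, Real.log_rpow hq]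
  ring

lemma aux_var_bound (r X ℓ : Z → ℝ) (t d c : ℝ)
    (hr0 : ∀ x, 0 ≤ r x) (hr1 : ∑ x, r x = 1)
    (hb : ∀ x, r x ≠ 0 → |X x| ≤ c)
    (hℓ : ∀ x, r x ≠ 0 → ℓ x = t * X x + d) :
    ∑ x, r x * (ℓ x - ∑ y, r y * ℓ y) ^ 2 ≤ t ^ 2 * c ^ 2 := by
  have hex : ∃ x, r x ≠ 0 := by
    by_contra hcon
    push_neg at hcon
    rw [Finset.sum_congr rfl (fun x _ => hcon x)] at hr1
    simp at hr1
  obtain ⟨x0, hx0⟩ := hex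
  have hc0 : 0 ≤ c := le_trans (abs_nonneg _) (hb x0 hx0)
  have hm : ∑ y, r y * ℓ y = t * (∑ y, r y * X y) + d := by
    have h1 : ∀ y, r y * ℓ y = t * (r y * X y) + d * r y := by
      intro y
      by_cases hy : r y = 0
      · simp [hy]
      · rw [hℓ y hy]; ring
    rw [Finset.sum_congr rfl (fun y _ => h1 y), Finset.sum_add_distrib,
      ← Finset.mul_sum, ← Finset.mul_sum, hr1, mul_one]
  have hterm : ∀ x, r x * (ℓ x - ∑ y, r y * ℓ y) ^ 2
      = t ^ 2 * (r x * (X x - ∑ y, r y * X y) ^ 2) := by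
    intro x
    by_cases hx : r x = 0
    · simp [hx]
    · rw [hm, hℓ x hx]; ring
  rw [Finset.sum_congr rfl (fun x _ => hterm x), ← Finset.mul_sum]
  have hvar : ∑ x, r x * (X x - ∑ y, r y * X y) ^ 2 ≤ c ^ 2 := by
    have hexp : ∑ x, r x * (X x - ∑ y, r y * X y) ^ 2
        = (∑ x, r x * X x ^ 2) - (∑ y, r y * X y) ^ 2 := by
      have h1 : ∀ x, r x * (X x - ∑ y, r y * X y) ^ 2
          = r x * X x ^ 2 - 2 * (∑ y, r y * X y) * (r x * X x)
            + (∑ y, r y * X y) ^ 2 * r x := by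
        intro x; ring
      rw [Finset.sum_congr rfl (fun x _ => h1 x), Finset.sum_add_distrib,
        Finset.sum_sub_distrib, ← Finset.mul_sum, ← Finset.mul_sum, hr1, mul_one]
      ring
    have hsq : ∑ x, r x * X x ^ 2 ≤ c ^ 2 := by
      have h2 : ∀ x, r x * X x ^ 2 ≤ r x * c ^ 2 := by
        intro x
        by_cases hx : r x = 0
        · simp [hx]
        · apply mul_le_mul_of_nonneg_left _ (hr0 x)
          have := hb x hx
          rw [abs_le] at this
          nlinarith [this.1, this.2]
      calc ∑ x, r x * X x ^ 2 ≤ ∑ x, r x * c ^ 2 := Finset.sum_le_sum fun x _ => h2 x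
        _ = c ^ 2 := by rw [← Finset.sum_mul, hr1, one_mul]
    nlinarith [sq_nonneg (∑ y, r y * X y)]
  exact mul_le_mul_of_nonneg_left hvar (sq_nonneg t)

lemma aux_mean_kl (r p : Z → ℝ) :
    ∑ x, r x * Real.log (r x / p x) = KLdiv r p := by
  unfold KLdiv
  refine Finset.sum_congr rfl fun x _ => ?_
  by_cases hx : r x = 0 <;> simp [hx]

lemma aux_klNonneg (r p : Z → ℝ) (hr0 : ∀ x, 0 ≤ r x) (hr1 : ∑ x, r x = 1)
    (hp0 : ∀ x, 0 ≤ p x) (hp1 : ∑ x, p x ≤ 1)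
    (hsupp : ∀ x, r x ≠ 0 → p x ≠ 0) : 0 ≤ KLdiv r p := by
  have h1 : ∀ x, r x - (if r x = 0 then 0 else p x)
      ≤ (if r x = 0 then (0:ℝ) else r x * Real.log (r x / p x)) := by
    intro x
    by_cases hx : r x = 0
    · simp [hx]
    · rw [if_neg hx, if_neg hx]
      have hrp : 0 < r x := (hr0 x).lt_of_ne (Ne.symm hx)
      have hpp : 0 < p x := (hp0 x).lt_of_ne (Ne.symm (hsupp x hx))
      have hlog := Real.log_le_sub_one_of_pos (div_pos hpp hrp)
      have hlog2 : Real.log (r x / p x) = - Real.log (p x / r x) := by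
        rw [Real.log_div hx (ne_of_gt hpp), Real.log_div (ne_of_gt hpp) hx]; ring
      rw [hlog2]
      have h3 := mul_le_mul_of_nonneg_left hlog hrp.le
      have h4 : r x * (p x / r x - 1) = p x - r x := by field_simp
      nlinarith
  have h2 : ∑ x, (r x - if r x = 0 then 0 else p x) ≤ KLdiv r p := by
    unfold KLdiv
    exact Finset.sum_le_sum fun x _ => h1 x
  have h3 : (0:ℝ) ≤ ∑ x, (r x - if r x = 0 then 0 else p x) := by
    rw [Finset.sum_sub_distrib, hr1]
    have h4 : ∑ x, (if r x = 0 then (0:ℝ) else p x) ≤ ∑ x, p x := by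
      refine Finset.sum_le_sum fun x _ => ?_
      split
      · exact hp0 x
      · exact le_rfl
    linarith
  linarith

lemma aux_tiltVar (p q : Z → ℝ) (hp : IsPMF p) (hq : IsPMF q)
    (pm : ℝ) (hpm0 : 0 < pm)
    (hpl : ∀ x, p x ≠ 0 → pm ≤ p x) (hql : ∀ x, q x ≠ 0 → pm ≤ q x)
    (hcs : CommonSupport p q) (t : ℝ) :
    ∑ x, tilted p q t x * (Real.log (tilted p q t x / p x)
        - ∑ y, tilted p q t y * Real.log (tilted p q t y / p y)) ^ 2
      ≤ t ^ 2 * Real.log (1 / pm) ^ 2 := by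
  have hC := aux_cherSum_pos p q hp.1 hq.1 hcs t
  have hlogpm : Real.log (1 / pm) = - Real.log pm := by
    rw [one_div, Real.log_inv]
  apply aux_var_bound (tilted p q t) (fun x => Real.log (q x) - Real.log (p x)) _
      t (- Real.log (cherSum p q t)) (Real.log (1 / pm))
      (fun x => aux_tilted_nonneg p q hp.1 hq.1 t x) (aux_tilted_sum p q t hC)
  · intro x hx
    obtain ⟨hpx, hqx⟩ := aux_tilted_supp p q t x hx
    have hpgt : 0 < p x := (hp.1 x).lt_of_ne (Ne.symm hpx)
    have hqgt : 0 < q x := (hq.1 x).lt_of_ne (Ne.symm hqx)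
    have l1 : Real.log pm ≤ Real.log (q x) := Real.log_le_log hpm0 (hql x hqx)
    have l2 : Real.log pm ≤ Real.log (p x) := Real.log_le_log hpm0 (hpl x hpx)
    have l3 : Real.log (p x) ≤ 0 := Real.log_nonpos (le_of_lt hpgt) (aux_le_one p hp x)
    have l4 : Real.log (q x) ≤ 0 := Real.log_nonpos (le_of_lt hqgt) (aux_le_one q hq x)
    rw [abs_le, hlogpm]
    constructor <;> [linarith; linarith]
  · intro x hx
    obtain ⟨hpx, hqx⟩ := aux_tilted_supp p q t x hx
    exact aux_tilt_ratio p q hp.1 hq.1 t hC x hpx hqx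

end Aux2


set_option maxHeartbeats 2000000 in
/-- Lemma 8 of the paper. -/
theorem nbound {Z : Type*} [Fintype Z] {n : ℕ}
    (Q : Bool → Z → ℝ) (hQ : IsChannel Q)
    (hsupp : CommonSupport (Q false) (Q true))
    (pmin : ℝ) (hpmin : MinTransChan Q pmin)
    (w0 w1 : Fin n → Bool)
    (D0 D1 : Finset (Fin n → Z)) (hdisj : Disjoint D0 D1)
    (hcover : ∀ z, z ∈ D0 ∨ z ∈ D1)
    (s : ℝ) (hs : s ∈ Set.Ioo (0 : ℝ) 1) :
    (- Real.log (∑ z ∈ D1, prodDist Q w0 z) ≤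
        ((Finset.univ.filter fun i : Fin n => w0 i = false ∧ w1 i = true).card : ℝ) *
            KLdiv (tilted (Q false) (Q true) s) (Q false) +
          ((Finset.univ.filter fun i : Fin n => w0 i = true ∧ w1 i = false).card : ℝ) *
            KLdiv (tilted (Q false) (Q true) (1 - s)) (Q true) +
          Real.sqrt (2 * n) * Real.log (1 / pmin) + Real.log 4) ∨
    (- Real.log (∑ z ∈ D0, prodDist Q w1 z) ≤
        ((Finset.univ.filter fun i : Fin n => w0 i = false ∧ w1 i = true).card : ℝ) *
            KLdiv (tilted (Q false) (Q true) s) (Q true) +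
          ((Finset.univ.filter fun i : Fin n => w0 i = true ∧ w1 i = false).card : ℝ) *
            KLdiv (tilted (Q false) (Q true) (1 - s)) (Q false) +
          Real.sqrt (2 * n) * Real.log (1 / pmin) + Real.log 4) := by
  classical
  obtain ⟨hs0, hs1⟩ := hs
  obtain ⟨hpm0, hexmin, hQlb⟩ := hpmin
  have hQ0 : IsPMF (Q false) := hQ false
  have hQ1 : IsPMF (Q true) := hQ true
  have hQle1 : ∀ b x, Q b x ≤ 1 := fun b x => aux_le_one (Q b) (hQ b) x
  have hpm1 : pmin ≤ 1 := by
    obtain ⟨bm, ym, hbm⟩ := hexmin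
    rw [← hbm]; exact hQle1 bm ym
  have hc0 : 0 ≤ Real.log (1 / pmin) :=
    Real.log_nonneg (by rw [le_div_iff₀ hpm0]; linarith)
  have hCs : 0 < cherSum (Q false) (Q true) s :=
    aux_cherSum_pos _ _ hQ0.1 hQ1.1 hsupp s
  have hCs' : 0 < cherSum (Q false) (Q true) (1 - s) :=
    aux_cherSum_pos _ _ hQ0.1 hQ1.1 hsupp (1 - s)
  have hT0 : ∀ x, 0 ≤ tilted (Q false) (Q true) s x :=
    aux_tilted_nonneg _ _ hQ0.1 hQ1.1 s
  have hT1 : ∑ x, tilted (Q false) (Q true) s x = 1 := aux_tilted_sum _ _ s hCs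
  have hT0' : ∀ x, 0 ≤ tilted (Q false) (Q true) (1 - s) x :=
    aux_tilted_nonneg _ _ hQ0.1 hQ1.1 _
  have hT1' : ∑ x, tilted (Q false) (Q true) (1 - s) x = 1 :=
    aux_tilted_sum _ _ _ hCs'
  have hKA : 0 ≤ KLdiv (tilted (Q false) (Q true) s) (Q false) :=
    aux_klNonneg _ _ hT0 hT1 hQ0.1 (le_of_eq hQ0.2)
      (fun x hx => (aux_tilted_supp _ _ _ _ hx).1)
  have hKC : 0 ≤ KLdiv (tilted (Q false) (Q true) s) (Q true) :=
    aux_klNonneg _ _ hT0 hT1 hQ1.1 (le_of_eq hQ1.2)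
      (fun x hx => (aux_tilted_supp _ _ _ _ hx).2)
  have hKD : 0 ≤ KLdiv (tilted (Q false) (Q true) (1 - s)) (Q false) :=
    aux_klNonneg _ _ hT0' hT1' hQ0.1 (le_of_eq hQ0.2)
      (fun x hx => (aux_tilted_supp _ _ _ _ hx).1)
  have hKB : 0 ≤ KLdiv (tilted (Q false) (Q true) (1 - s)) (Q true) :=
    aux_klNonneg _ _ hT0' hT1' hQ1.1 (le_of_eq hQ1.2)
      (fun x hx => (aux_tilted_supp _ _ _ _ hx).2)
  have hsqrtnn : 0 ≤ Real.sqrt (2 * (n:ℝ)) * Real.log (1 / pmin) :=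
    mul_nonneg (Real.sqrt_nonneg _) hc0
  have hlog4 : Real.log (1 / (4:ℝ)) = - Real.log 4 := by rw [one_div, Real.log_inv]
  have hcard1 : (0:ℝ) ≤
      ((Finset.univ.filter fun i : Fin n => w0 i = false ∧ w1 i = true).card : ℝ) :=
    Nat.cast_nonneg _
  have hcard2 : (0:ℝ) ≤
      ((Finset.univ.filter fun i : Fin n => w0 i = true ∧ w1 i = false).card : ℝ) :=
    Nat.cast_nonneg _
  by_cases hcheap0 : (1:ℝ)/4 ≤ ∑ z ∈ D1, prodDist Q w0 z
  · left
    have hlog : Real.log (1/(4:ℝ)) ≤ Real.log (∑ z ∈ D1, prodDist Q w0 z) :=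
      Real.log_le_log (by norm_num) hcheap0
    rw [hlog4] at hlog
    have t1 := mul_nonneg hcard1 hKA
    have t2 := mul_nonneg hcard2 hKB
    linarith
  by_cases hcheap1 : (1:ℝ)/4 ≤ ∑ z ∈ D0, prodDist Q w1 z
  · right
    have hlog : Real.log (1/(4:ℝ)) ≤ Real.log (∑ z ∈ D0, prodDist Q w1 z) :=
      Real.log_le_log (by norm_num) hcheap1
    rw [hlog4] at hlog
    have t1 := mul_nonneg hcard1 hKC
    have t2 := mul_nonneg hcard2 hKD
    linarith
  push_neg at hcheap0 hcheap1
  -- hard case setup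
  have huniv : D0 ∪ D1 = Finset.univ := by
    apply Finset.eq_univ_of_forall
    intro z
    rcases hcover z with h | h
    · exact Finset.mem_union_left _ h
    · exact Finset.mem_union_right _ h
  have hmass : ∀ w : Fin n → Bool,
      ∑ z ∈ D0, prodDist Q w z + ∑ z ∈ D1, prodDist Q w z = 1 := by
    intro w
    rw [← Finset.sum_union hdisj, huniv]
    show ∑ z : Fin n → Z, ∏ i, Q (w i) (z i) = 1
    rw [aux_sum_prod (fun i x => Q (w i) x)]
    rw [Finset.prod_congr rfl (fun i _ => (hQ (w i)).2)]
    simp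
  have hprodne : ∃ z ∈ D0, prodDist Q w0 z ≠ prodDist Q w1 z := by
    by_contra hcon
    push_neg at hcon
    have heq : ∑ z ∈ D0, prodDist Q w0 z = ∑ z ∈ D0, prodDist Q w1 z :=
      Finset.sum_congr rfl hcon
    have h0 := hmass w0
    linarith
  obtain ⟨z0, _, hz0ne⟩ := hprodne
  have hfacne : ∃ i, Q (w0 i) (z0 i) ≠ Q (w1 i) (z0 i) := by
    by_contra hcon
    push_neg at hcon
    exact hz0ne (Finset.prod_congr rfl fun i _ => hcon i)
  obtain ⟨i0, hi0⟩ := hfacne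
  have hnpos : 0 < n := i0.pos
  have hnR : (0:ℝ) < n := by exact_mod_cast hnpos
  have hQne : ∃ x, Q false x ≠ Q true x := by
    cases hb0 : w0 i0 <;> cases hb1 : w1 i0 <;> rw [hb0, hb1] at hi0
    · exact absurd rfl hi0
    · exact ⟨z0 i0, hi0⟩
    · exact ⟨z0 i0, Ne.symm hi0⟩
    · exact absurd rfl hi0
  have hpmlt1 : pmin < 1 := by
    by_contra hge
    push_neg at hge
    have hall : ∀ b x, Q b x = 0 ∨ Q b x = 1 := by
      intro b x
      by_cases h : Q b x = 0
      · exact Or.inl h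
      · exact Or.inr (le_antisymm (hQle1 b x) (le_trans hge (hQlb b x h)))
    obtain ⟨xc, hxc0, hxc1⟩ := hsupp
    have h1 : Q false xc = 1 := (hall false xc).resolve_left hxc0
    have h2 : Q true xc = 1 := (hall true xc).resolve_left hxc1
    obtain ⟨x, hx⟩ := hQne
    apply hx
    by_cases hxeq : x = xc
    · rw [hxeq, h1, h2]
    · rw [aux_eq_one_unique (Q false) hQ0 xc h1 x hxeq,
        aux_eq_one_unique (Q true) hQ1 xc h2 x hxeq]
  have hcpos : 0 < Real.log (1 / pmin) :=
    Real.log_pos (by rw [lt_div_iff₀ hpm0]; linarith)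
  -- the tilted rows
  set r : Fin n → Z → ℝ := fun i x =>
    if w0 i = w1 i then Q (w0 i) x
    else if w0 i = false then tilted (Q false) (Q true) s x
    else tilted (Q false) (Q true) (1 - s) x with hrdef
  have hreq : ∀ i, w0 i = w1 i → ∀ x, r i x = Q (w0 i) x := by
    intro i h x; rw [hrdef]; simp only []; rw [if_pos h]
  have hrA : ∀ i, ¬ (w0 i = w1 i) → w0 i = false →
      ∀ x, r i x = tilted (Q false) (Q true) s x := by
    intro i h h1 x; rw [hrdef]; simp only []; rw [if_neg h, if_pos h1]
  have hrB : ∀ i, ¬ (w0 i = w1 i) → w0 i = true →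
      ∀ x, r i x = tilted (Q false) (Q true) (1 - s) x := by
    intro i h h1 x; rw [hrdef]; simp only []
    rw [if_neg h, if_neg (by simp [h1])]
  have hbool : ∀ i, ¬ (w0 i = w1 i) →
      (w0 i = false ∧ w1 i = true) ∨ (w0 i = true ∧ w1 i = false) := by
    intro i h
    cases hb0 : w0 i <;> cases hb1 : w1 i <;> simp_all
  have hswap1 : tilted (Q false) (Q true) s = tilted (Q true) (Q false) (1 - s) :=
    aux_tilted_swap _ _ _
  have hswap2 : tilted (Q false) (Q true) (1 - s) = tilted (Q true) (Q false) s := by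
    have h := aux_tilted_swap (Q false) (Q true) (1 - s)
    rwa [show (1:ℝ) - (1 - s) = s from by ring] at h
  have hsupp' : CommonSupport (Q true) (Q false) := by
    obtain ⟨x, h1, h2⟩ := hsupp; exact ⟨x, h2, h1⟩
  have hr0 : ∀ i x, 0 ≤ r i x := by
    intro i x
    by_cases h : w0 i = w1 i
    · rw [hreq i h x]; exact (hQ _).1 x
    · rcases hbool i h with ⟨h1, _⟩ | ⟨h1, _⟩
      · rw [hrA i h h1 x]; exact hT0 x
      · rw [hrB i h h1 x]; exact hT0' x
  have hr1 : ∀ i, ∑ x, r i x = 1 := by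
    intro i
    by_cases h : w0 i = w1 i
    · rw [Finset.sum_congr rfl (fun x _ => hreq i h x)]; exact (hQ _).2
    · rcases hbool i h with ⟨h1, _⟩ | ⟨h1, _⟩
      · rw [Finset.sum_congr rfl (fun x _ => hrA i h h1 x)]; exact hT1
      · rw [Finset.sum_congr rfl (fun x _ => hrB i h h1 x)]; exact hT1'
  have hrs0 : ∀ i x, r i x ≠ 0 → Q (w0 i) x ≠ 0 := by
    intro i x hnz
    by_cases h : w0 i = w1 i
    · rw [hreq i h x] at hnz; exact hnz
    · rcases hbool i h with ⟨h1, _⟩ | ⟨h1, _⟩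
      · rw [hrA i h h1 x] at hnz
        rw [h1]; exact (aux_tilted_supp _ _ _ _ hnz).1
      · rw [hrB i h h1 x] at hnz
        rw [h1]; exact (aux_tilted_supp _ _ _ _ hnz).2
  have hrs1 : ∀ i x, r i x ≠ 0 → Q (w1 i) x ≠ 0 := by
    intro i x hnz
    by_cases h : w0 i = w1 i
    · rw [hreq i h x] at hnz; rw [← h]; exact hnz
    · rcases hbool i h with ⟨h1, h2⟩ | ⟨h1, h2⟩
      · rw [hrA i h h1 x] at hnz
        rw [h2]; exact (aux_tilted_supp _ _ _ _ hnz).2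
      · rw [hrB i h h1 x] at hnz
        rw [h2]; exact (aux_tilted_supp _ _ _ _ hnz).1
  have hlogself : ∀ (b : Bool) (x : Z), Real.log (Q b x / Q b x) = 0 := by
    intro b x
    by_cases hx : Q b x = 0
    · rw [hx]; simp
    · rw [div_self hx, Real.log_one]
  have hm0 : ∀ i, (∑ x, r i x * Real.log (r i x / Q (w0 i) x))
      = (if w0 i = w1 i then (0:ℝ)
        else if w0 i = false then KLdiv (tilted (Q false) (Q true) s) (Q false)
        else KLdiv (tilted (Q false) (Q true) (1 - s)) (Q true)) := by
    intro i
    by_cases h : w0 i = w1 i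
    · rw [if_pos h]
      simp only [hreq i h]
      apply Finset.sum_eq_zero
      intro x _
      rw [hlogself, mul_zero]
    · rw [if_neg h]
      rcases hbool i h with ⟨h1, _⟩ | ⟨h1, _⟩
      · rw [if_pos h1]
        simp only [hrA i h h1, h1]
        exact aux_mean_kl _ _
      · rw [if_neg (by simp [h1])]
        simp only [hrB i h h1, h1]
        exact aux_mean_kl _ _
  have hm1 : ∀ i, (∑ x, r i x * Real.log (r i x / Q (w1 i) x))
      = (if w0 i = w1 i then (0:ℝ)
        else if w0 i = false then KLdiv (tilted (Q false) (Q true) s) (Q true)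
        else KLdiv (tilted (Q false) (Q true) (1 - s)) (Q false)) := by
    intro i
    by_cases h : w0 i = w1 i
    · rw [if_pos h]
      simp only [hreq i h, h]
      apply Finset.sum_eq_zero
      intro x _
      rw [hlogself, mul_zero]
    · rw [if_neg h]
      rcases hbool i h with ⟨h1, h2⟩ | ⟨h1, h2⟩
      · rw [if_pos h1]
        simp only [hrA i h h1, h2]
        exact aux_mean_kl _ _
      · rw [if_neg (by simp [h1])]
        simp only [hrB i h h1, h2]
        exact aux_mean_kl _ _
  have hv0 : ∀ i, ∑ x, r i x *
      (Real.log (r i x / Q (w0 i) x)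
        - ∑ y, r i y * Real.log (r i y / Q (w0 i) y)) ^ 2
      ≤ s ^ 2 * Real.log (1 / pmin) ^ 2 := by
    intro i
    by_cases h : w0 i = w1 i
    · simp only [hreq i h, hlogself]
      simp
      positivity
    · rcases hbool i h with ⟨h1, h2⟩ | ⟨h1, h2⟩
      · simp only [hrA i h h1, h1]
        exact aux_tiltVar (Q false) (Q true) hQ0 hQ1 pmin hpm0
          (fun x => hQlb false x) (fun x => hQlb true x) hsupp s
      · simp only [hrB i h h1, h1]
        have hvv := aux_tiltVar (Q true) (Q false) hQ1 hQ0 pmin hpm0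
          (fun x => hQlb true x) (fun x => hQlb false x) hsupp' s
        rw [← hswap2] at hvv
        exact hvv
  have hv1 : ∀ i, ∑ x, r i x *
      (Real.log (r i x / Q (w1 i) x)
        - ∑ y, r i y * Real.log (r i y / Q (w1 i) y)) ^ 2
      ≤ (1 - s) ^ 2 * Real.log (1 / pmin) ^ 2 := by
    intro i
    by_cases h : w0 i = w1 i
    · simp only [hreq i h, h, hlogself]
      simp
      positivity
    · rcases hbool i h with ⟨h1, h2⟩ | ⟨h1, h2⟩
      · simp only [hrA i h h1, h2]
        have hvv := aux_tiltVar (Q true) (Q false) hQ1 hQ0 pmin hpm0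
          (fun x => hQlb true x) (fun x => hQlb false x) hsupp' (1 - s)
        rw [← hswap1] at hvv
        exact hvv
      · simp only [hrB i h h1, h2]
        exact aux_tiltVar (Q false) (Q true) hQ0 hQ1 pmin hpm0
          (fun x => hQlb false x) (fun x => hQlb true x) hsupp (1 - s)
  set lam : ℝ := Real.sqrt (2 * (n:ℝ)) * Real.log (1 / pmin) with hlamdef
  have hlampos : 0 < lam :=
    mul_pos (Real.sqrt_pos.2 (by linarith)) hcpos
  have hlamsq : lam ^ 2 = 2 * (n:ℝ) * Real.log (1 / pmin) ^ 2 := by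
    rw [hlamdef, mul_pow, Real.sq_sqrt (by positivity)]
  have hhalf : (n:ℝ) * (s ^ 2 * Real.log (1 / pmin) ^ 2) / lam ^ 2
      + (n:ℝ) * ((1 - s) ^ 2 * Real.log (1 / pmin) ^ 2) / lam ^ 2 ≤ 1/2 := by
    rw [hlamsq, ← add_div,
      div_le_iff₀ (mul_pos (by linarith : (0:ℝ) < 2 * (n:ℝ)) (pow_pos hcpos 2))]
    nlinarith [mul_nonneg (mul_nonneg hnR.le (mul_nonneg hcpos.le hcpos.le))
      (mul_nonneg hs0.le (by linarith : (0:ℝ) ≤ 1 - s))]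
  set M0 : ℝ := ∑ i, ∑ y, r i y * Real.log (r i y / Q (w0 i) y) with hM0def
  set M1 : ℝ := ∑ i, ∑ y, r i y * Real.log (r i y / Q (w1 i) y) with hM1def
  set B0 : Finset (Fin n → Z) := Finset.univ.filter (fun z : Fin n → Z =>
    M0 + lam ≤ ∑ i, Real.log (r i (z i) / Q (w0 i) (z i))) with hB0def
  set B1 : Finset (Fin n → Z) := Finset.univ.filter (fun z : Fin n → Z =>
    M1 + lam ≤ ∑ i, Real.log (r i (z i) / Q (w1 i) (z i))) with hB1def
  have hch0 : ∑ z ∈ B0, (∏ i, r i (z i))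
      ≤ (n:ℝ) * (s ^ 2 * Real.log (1 / pmin) ^ 2) / lam ^ 2 :=
    aux_cheb r (fun i x => Real.log (r i x / Q (w0 i) x)) _ lam hr0 hr1 hv0 hlampos
  have hch1 : ∑ z ∈ B1, (∏ i, r i (z i))
      ≤ (n:ℝ) * ((1 - s) ^ 2 * Real.log (1 / pmin) ^ 2) / lam ^ 2 :=
    aux_cheb r (fun i x => Real.log (r i x / Q (w1 i) x)) _ lam hr0 hr1 hv1 hlampos
  have hRnn : ∀ z : Fin n → Z, 0 ≤ ∏ i, r i (z i) :=
    fun z => Finset.prod_nonneg fun i _ => hr0 i (z i)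
  have hRmass : ∑ z ∈ D0, (∏ i, r i (z i)) + ∑ z ∈ D1, (∏ i, r i (z i)) = 1 := by
    rw [← Finset.sum_union hdisj, huniv]
    rw [aux_sum_prod r]
    rw [Finset.prod_congr rfl (fun i _ => hr1 i)]
    simp
  have hsplit0 : ∑ z ∈ D1, (∏ i, r i (z i))
      ≤ (∑ z ∈ D1 \ B0, ∏ i, r i (z i)) + ∑ z ∈ B0, ∏ i, r i (z i) := by
    rw [← Finset.sum_union Finset.sdiff_disjoint]
    apply Finset.sum_le_sum_of_subset_of_nonneg
    · intro z hz
      by_cases h : z ∈ B0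
      · exact Finset.mem_union_right _ h
      · exact Finset.mem_union_left _ (Finset.mem_sdiff.2 ⟨hz, h⟩)
    · intro z _ _; exact hRnn z
  have hsplit1 : ∑ z ∈ D0, (∏ i, r i (z i))
      ≤ (∑ z ∈ D0 \ B1, ∏ i, r i (z i)) + ∑ z ∈ B1, ∏ i, r i (z i) := by
    rw [← Finset.sum_union Finset.sdiff_disjoint]
    apply Finset.sum_le_sum_of_subset_of_nonneg
    · intro z hz
      by_cases h : z ∈ B1
      · exact Finset.mem_union_right _ h
      · exact Finset.mem_union_left _ (Finset.mem_sdiff.2 ⟨hz, h⟩)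
    · intro z _ _; exact hRnn z
  have hquarter : (1:ℝ)/4 ≤ ∑ z ∈ D1 \ B0, (∏ i, r i (z i))
      ∨ (1:ℝ)/4 ≤ ∑ z ∈ D0 \ B1, (∏ i, r i (z i)) := by
    by_contra hcon
    push_neg at hcon
    linarith [hcon.1, hcon.2]
  have hsplitgen : ∀ (A B : ℝ) (i : Fin n),
      (if w0 i = w1 i then (0:ℝ) else if w0 i = false then A else B)
        = (if w0 i = false ∧ w1 i = true then A else 0)
          + (if w0 i = true ∧ w1 i = false then B else 0) := by
    intro A B i
    cases hb0 : w0 i <;> cases hb1 : w1 i <;> simp [hb0, hb1]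
  rcases hquarter with hq | hq
  · left
    have hkey : ∀ z ∈ D1 \ B0,
        (∏ i, r i (z i)) * Real.exp (-(M0 + lam)) ≤ prodDist Q w0 z := by
      intro z hz
      rw [Finset.mem_sdiff, hB0def] at hz
      have hznB : ∑ i, Real.log (r i (z i) / Q (w0 i) (z i)) < M0 + lam := by
        by_contra hle
        push_neg at hle
        exact hz.2 (Finset.mem_filter.2 ⟨Finset.mem_univ z, hle⟩)
      by_cases hR : (∏ i, r i (z i)) = 0
      · rw [hR, zero_mul]
        exact Finset.prod_nonneg fun i _ => (hQ _).1 _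
      · have hfac : ∀ i, r i (z i) ≠ 0 :=
          fun i hzero => hR (Finset.prod_eq_zero (Finset.mem_univ i) hzero)
        have hqfac : ∀ i, Q (w0 i) (z i) ≠ 0 := fun i => hrs0 i (z i) (hfac i)
        have hQpos : 0 < prodDist Q w0 z :=
          Finset.prod_pos fun i _ => ((hQ _).1 _).lt_of_ne (Ne.symm (hqfac i))
        have hRpos : 0 < ∏ i, r i (z i) :=
          Finset.prod_pos fun i _ => (hr0 i (z i)).lt_of_ne (Ne.symm (hfac i))
        have hlogeq : ∑ i, Real.log (r i (z i) / Q (w0 i) (z i))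
            = Real.log ((∏ i, r i (z i)) / prodDist Q w0 z) := by
          rw [show prodDist Q w0 z = ∏ i, Q (w0 i) (z i) from rfl]
          rw [← Finset.prod_div_distrib]
          rw [Real.log_prod (fun i _ => div_ne_zero (hfac i) (hqfac i))]
        have hratio : (∏ i, r i (z i)) / prodDist Q w0 z < Real.exp (M0 + lam) := by
          rw [← Real.log_lt_iff_lt_exp (div_pos hRpos hQpos), ← hlogeq]
          exact hznB
        rw [div_lt_iff₀ hQpos] at hratio
        rw [Real.exp_neg, ← div_eq_mul_inv, div_le_iff₀ (Real.exp_pos _)]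
        linarith [mul_comm (Real.exp (M0 + lam)) (prodDist Q w0 z)]
    have hsum : (1/4 : ℝ) * Real.exp (-(M0 + lam)) ≤ ∑ z ∈ D1, prodDist Q w0 z := by
      calc (1/4 : ℝ) * Real.exp (-(M0 + lam))
          ≤ (∑ z ∈ D1 \ B0, ∏ i, r i (z i)) * Real.exp (-(M0 + lam)) :=
            mul_le_mul_of_nonneg_right hq (Real.exp_pos _).le
        _ = ∑ z ∈ D1 \ B0, (∏ i, r i (z i)) * Real.exp (-(M0 + lam)) := by
            rw [Finset.sum_mul]
        _ ≤ ∑ z ∈ D1 \ B0, prodDist Q w0 z := Finset.sum_le_sum hkey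
        _ ≤ ∑ z ∈ D1, prodDist Q w0 z := by
            apply Finset.sum_le_sum_of_subset_of_nonneg Finset.sdiff_subset
            intro z _ _
            exact Finset.prod_nonneg fun i _ => (hQ _).1 _
    have hlog := Real.log_le_log (by positivity) hsum
    rw [Real.log_mul (by norm_num) (Real.exp_ne_zero _), Real.log_exp, hlog4] at hlog
    have hM0eq : M0 =
        ((Finset.univ.filter fun i : Fin n => w0 i = false ∧ w1 i = true).card : ℝ) *
            KLdiv (tilted (Q false) (Q true) s) (Q false)
        + ((Finset.univ.filter fun i : Fin n => w0 i = true ∧ w1 i = false).card : ℝ) *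
            KLdiv (tilted (Q false) (Q true) (1 - s)) (Q true) := by
      rw [hM0def]
      rw [Finset.sum_congr rfl (fun i _ => hm0 i)]
      rw [Finset.sum_congr rfl (fun i _ => hsplitgen _ _ i)]
      rw [Finset.sum_add_distrib, ← Finset.sum_filter, ← Finset.sum_filter,
        Finset.sum_const, Finset.sum_const, nsmul_eq_mul, nsmul_eq_mul]
    linarith [hM0eq, hlog]
  · right
    have hkey : ∀ z ∈ D0 \ B1,
        (∏ i, r i (z i)) * Real.exp (-(M1 + lam)) ≤ prodDist Q w1 z := by
      intro z hz
      rw [Finset.mem_sdiff, hB1def] at hz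
      have hznB : ∑ i, Real.log (r i (z i) / Q (w1 i) (z i)) < M1 + lam := by
        by_contra hle
        push_neg at hle
        exact hz.2 (Finset.mem_filter.2 ⟨Finset.mem_univ z, hle⟩)
      by_cases hR : (∏ i, r i (z i)) = 0
      · rw [hR, zero_mul]
        exact Finset.prod_nonneg fun i _ => (hQ _).1 _
      · have hfac : ∀ i, r i (z i) ≠ 0 :=
          fun i hzero => hR (Finset.prod_eq_zero (Finset.mem_univ i) hzero)
        have hqfac : ∀ i, Q (w1 i) (z i) ≠ 0 := fun i => hrs1 i (z i) (hfac i)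
        have hQpos : 0 < prodDist Q w1 z :=
          Finset.prod_pos fun i _ => ((hQ _).1 _).lt_of_ne (Ne.symm (hqfac i))
        have hRpos : 0 < ∏ i, r i (z i) :=
          Finset.prod_pos fun i _ => (hr0 i (z i)).lt_of_ne (Ne.symm (hfac i))
        have hlogeq : ∑ i, Real.log (r i (z i) / Q (w1 i) (z i))
            = Real.log ((∏ i, r i (z i)) / prodDist Q w1 z) := by
          rw [show prodDist Q w1 z = ∏ i, Q (w1 i) (z i) from rfl]
          rw [← Finset.prod_div_distrib]
          rw [Real.log_prod (fun i _ => div_ne_zero (hfac i) (hqfac i))]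
        have hratio : (∏ i, r i (z i)) / prodDist Q w1 z < Real.exp (M1 + lam) := by
          rw [← Real.log_lt_iff_lt_exp (div_pos hRpos hQpos), ← hlogeq]
          exact hznB
        rw [div_lt_iff₀ hQpos] at hratio
        rw [Real.exp_neg, ← div_eq_mul_inv, div_le_iff₀ (Real.exp_pos _)]
        linarith [mul_comm (Real.exp (M1 + lam)) (prodDist Q w1 z)]
    have hsum : (1/4 : ℝ) * Real.exp (-(M1 + lam)) ≤ ∑ z ∈ D0, prodDist Q w1 z := by
      calc (1/4 : ℝ) * Real.exp (-(M1 + lam))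
          ≤ (∑ z ∈ D0 \ B1, ∏ i, r i (z i)) * Real.exp (-(M1 + lam)) :=
            mul_le_mul_of_nonneg_right hq (Real.exp_pos _).le
        _ = ∑ z ∈ D0 \ B1, (∏ i, r i (z i)) * Real.exp (-(M1 + lam)) := by
            rw [Finset.sum_mul]
        _ ≤ ∑ z ∈ D0 \ B1, prodDist Q w1 z := Finset.sum_le_sum hkey
        _ ≤ ∑ z ∈ D0, prodDist Q w1 z := by
            apply Finset.sum_le_sum_of_subset_of_nonneg Finset.sdiff_subset
            intro z _ _
            exact Finset.prod_nonneg fun i _ => (hQ _).1 _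
    have hlog := Real.log_le_log (by positivity) hsum
    rw [Real.log_mul (by norm_num) (Real.exp_ne_zero _), Real.log_exp, hlog4] at hlog
    have hM1eq : M1 =
        ((Finset.univ.filter fun i : Fin n => w0 i = false ∧ w1 i = true).card : ℝ) *
            KLdiv (tilted (Q false) (Q true) s) (Q true)
        + ((Finset.univ.filter fun i : Fin n => w0 i = true ∧ w1 i = false).card : ℝ) *
            KLdiv (tilted (Q false) (Q true) (1 - s)) (Q false) := by
      rw [hM1def]
      rw [Finset.sum_congr rfl (fun i _ => hm1 i)]
      rw [Finset.sum_congr rfl (fun i _ => hsplitgen _ _ i)]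
      rw [Finset.sum_add_distrib, ← Finset.sum_filter, ← Finset.sum_filter,
        Finset.sum_const, Finset.sum_const, nsmul_eq_mul, nsmul_eq_mul]
    linarith [hM1eq, hlog]

end
end
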